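/- arXiv:1006.4255 — 3 statements merged into one kernel-verified Lean document; each statement's English description precedes it below -/
import Mathlib

section
/- Let P be a two-user q-ary input multiple-access channel (q prime). Then (1/2)𝕀(P⁻) + (1/2)𝕀(P⁺) ⊆ 𝕀(P), where the left-hand side denotes the set sum { (1/2)a + (1/2)b : a ∈ 𝕀(P⁻), b ∈ 𝕀(P⁺) }. Moreover, there exists a point (R₁,R₂) ∈ (1/2)𝕀(P⁻) + (1/2)𝕀(P⁺) with R₁ + R₂ = I⁽¹²⁾(P), i.e. lying on the dominant face of 𝕀(P). -/
open Real


open Finset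

namespace PolarMAC

/-- A two-user `q`-ary input multiple-access channel: an arbitrary finite output
alphabet `Y` together with transition probabilities `P x w y = P(y | x, w)`. -/
structure MAC (q : ℕ) where
  Y : Type
  [fintypeY : Fintype Y]
  P : ZMod q → ZMod q → Y → ℝ

attribute [instance] MAC.fintypeY

/-- `M` is a genuine MAC: entries nonnegative and rows summing to one. -/
def IsMAC {q : ℕ} [Fact (Nat.Prime q)] (M : MAC q) : Prop :=
  (∀ x w y, 0 ≤ M.P x w y) ∧ ∀ x w, ∑ y, M.P x w y = 1

/-- Entropy (base `q`) of a pmf on a finite type. -/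
noncomputable def Hq (q : ℕ) {α : Type*} [Fintype α] (p : α → ℝ) : ℝ :=
  ∑ a, -(p a * Real.logb q (p a))

/-- Mutual information (base `q`) between the two coordinates of a joint pmf. -/
noncomputable def MIq (q : ℕ) {α β : Type*} [Fintype α] [Fintype β] (p : α → β → ℝ) : ℝ :=
  Hq q (fun a => ∑ b, p a b) + Hq q (fun b => ∑ a, p a b) - Hq q (fun ab : α × β => p ab.1 ab.2)

variable (q : ℕ) [Fact (Nat.Prime q)]

/-- `I⁽¹⁾(P) = I(X; Y W)` for independent uniform inputs. -/
noncomputable def I1 (M : MAC q) : ℝ :=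
  MIq q (fun (x : ZMod q) (wy : ZMod q × M.Y) => M.P x wy.1 wy.2 / (q : ℝ) ^ 2)

/-- `I⁽²⁾(P) = I(W; Y X)` for independent uniform inputs. -/
noncomputable def I2 (M : MAC q) : ℝ :=
  MIq q (fun (w : ZMod q) (xy : ZMod q × M.Y) => M.P xy.1 w xy.2 / (q : ℝ) ^ 2)

/-- `I⁽¹²⁾(P) = I(X W; Y)` for independent uniform inputs. -/
noncomputable def I12 (M : MAC q) : ℝ :=
  MIq q (fun (xw : ZMod q × ZMod q) (y : M.Y) => M.P xw.1 xw.2 y / (q : ℝ) ^ 2)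

/-- `K(P) = (I⁽¹⁾(P), I⁽²⁾(P), I⁽¹²⁾(P)) ∈ ℝ³`, with the Euclidean norm. -/
noncomputable def Kvec (M : MAC q) : EuclideanSpace ℝ (Fin 3) :=
  WithLp.toLp 2 ![I1 q M, I2 q M, I12 q M]

/-- The transform `P⁻(y₁,y₂ | u₁,v₁) = q⁻² ∑_{u₂,v₂} P(y₁|u₁+u₂, v₁+v₂) P(y₂|u₂,v₂)`. -/
noncomputable def minusT (M : MAC q) : MAC q where
  Y := M.Y × M.Y
  P := fun u₁ v₁ y =>
    ((q : ℝ) ^ 2)⁻¹ * ∑ u₂, ∑ v₂, M.P (u₁ + u₂) (v₁ + v₂) y.1 * M.P u₂ v₂ y.2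

/-- The transform `P⁺(y₁,y₂,u₁,v₁ | u₂,v₂) = q⁻² P(y₁|u₁+u₂, v₁+v₂) P(y₂|u₂,v₂)`,
with output `((y₁, y₂), (u₁, v₁))`. -/
noncomputable def plusT (M : MAC q) : MAC q where
  Y := (M.Y × M.Y) × ZMod q × ZMod q
  P := fun u₂ v₂ z =>
    ((q : ℝ) ^ 2)⁻¹ * (M.P (z.2.1 + u₂) (z.2.2 + v₂) z.1.1 * M.P u₂ v₂ z.1.2)


/-- The uniform-input rate region
`𝕀(P) = {(R₁,R₂) : 0 ≤ R₁ ≤ I⁽¹⁾(P), 0 ≤ R₂ ≤ I⁽²⁾(P), R₁+R₂ ≤ I⁽¹²⁾(P)}`. -/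
noncomputable def rateRegion (M : MAC q) : Set (ℝ × ℝ) :=
  {r : ℝ × ℝ | 0 ≤ r.1 ∧ r.1 ≤ I1 q M ∧ 0 ≤ r.2 ∧ r.2 ≤ I2 q M ∧ r.1 + r.2 ≤ I12 q M}



section EntAux
set_option linter.unusedSectionVars false
variable {α β γ : Type*} [Fintype α] [Fintype β] [Fintype γ]

noncomputable def ent (f : α → ℝ) : ℝ := ∑ a, Real.negMulLog (f a)

lemma ent_congr {f g : α → ℝ} (h : ∀ a, f a = g a) : ent f = ent g := by
  unfold ent; exact Finset.sum_congr rfl fun a _ => by rw [h]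

lemma ent_comp_equiv (e : α ≃ β) (f : β → ℝ) : ent (fun a => f (e a)) = ent f := by
  unfold ent; exact Fintype.sum_equiv e _ _ (fun a => rfl)

lemma ent_const (c : ℝ) : ent (fun _ : α => c) = (Fintype.card α : ℝ) * Real.negMulLog c := by
  simp [ent, Finset.sum_const, nsmul_eq_mul, Finset.card_univ]

lemma ent_prod_mul (f : α → ℝ) (g : β → ℝ) (hf : ∑ a, f a = 1) (hg : ∑ b, g b = 1) :
    ent (fun x : α × β => f x.1 * g x.2) = ent f + ent g := by
  unfold ent
  rw [Fintype.sum_prod_type]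
  have : ∀ a, ∑ b, Real.negMulLog (f a * g b)
      = (∑ b, g b) * Real.negMulLog (f a) + f a * ∑ b, Real.negMulLog (g b) := by
    intro a
    rw [Finset.sum_mul, Finset.mul_sum]
    rw [← Finset.sum_add_distrib]
    exact Finset.sum_congr rfl fun b _ => by rw [Real.negMulLog_mul]
  simp only [this, hg, one_mul]
  rw [Finset.sum_add_distrib, ← Finset.sum_mul, hf, one_mul]

lemma gibbs (w r : α → ℝ) (hw : ∀ a, 0 ≤ w a) (hr : ∀ a, 0 ≤ r a)
    (hsum : ∑ a, r a ≤ ∑ a, w a) (hz : ∀ a, r a = 0 → w a = 0) :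
    ∑ a, w a * Real.log (r a) ≤ ∑ a, w a * Real.log (w a) := by
  have key : ∀ a, w a * Real.log (r a) - w a * Real.log (w a) ≤ r a - w a := by
    intro a
    rcases eq_or_lt_of_le (hw a) with h0 | h0
    · simp [← h0]; exact hr a
    · have hrp : 0 < r a := by
        rcases eq_or_lt_of_le (hr a) with h | h
        · exact absurd (hz a h.symm) (ne_of_gt h0)
        · exact h
      have h1 := Real.log_le_sub_one_of_pos (show (0:ℝ) < r a / w a by positivity)
      rw [Real.log_div (ne_of_gt hrp) (ne_of_gt h0)] at h1
      have h2 := mul_le_mul_of_nonneg_left h1 (le_of_lt h0)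
      calc w a * Real.log (r a) - w a * Real.log (w a)
          = w a * (Real.log (r a) - Real.log (w a)) := by ring
        _ ≤ w a * (r a / w a - 1) := h2
        _ = r a - w a := by field_simp
  have h3 : ∑ a, (w a * Real.log (r a) - w a * Real.log (w a)) ≤ ∑ a, (r a - w a) :=
    Finset.sum_le_sum fun a _ => key a
  rw [Finset.sum_sub_distrib, Finset.sum_sub_distrib] at h3
  linarith

lemma ent_eq_neg (f : α → ℝ) : ent f = -∑ a, f a * Real.log (f a) := by
  simp [ent, Real.negMulLog, neg_mul, Finset.sum_neg_distrib]

lemma le_marg {p : α → β → ℝ} (hp : ∀ a b, 0 ≤ p a b) (a : α) (b : β) :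
    p a b ≤ ∑ b', p a b' :=
  Finset.single_le_sum (fun b' _ => hp a b') (Finset.mem_univ b)

lemma subadd (p : α → β → ℝ) (hp : ∀ a b, 0 ≤ p a b)
    (hs : ∑ a, ∑ b, p a b = 1) :
    ent (fun x : α × β => p x.1 x.2) ≤ ent (fun a => ∑ b, p a b) + ent (fun b => ∑ a, p a b) := by
  set pA : α → ℝ := fun a => ∑ b, p a b with hpA
  set pB : β → ℝ := fun b => ∑ a, p a b with hpB
  have hpAnn : ∀ a, 0 ≤ pA a := fun a => Finset.sum_nonneg fun b _ => hp a b
  have hpBnn : ∀ b, 0 ≤ pB b := fun b => Finset.sum_nonneg fun a _ => hp a b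
  have hsB : ∑ b, pB b = 1 := by rw [hpB]; rw [Finset.sum_comm]; exact hs
  have key := gibbs (fun x : α × β => p x.1 x.2) (fun x : α × β => pA x.1 * pB x.2)
    (fun x => hp x.1 x.2) (fun x => mul_nonneg (hpAnn x.1) (hpBnn x.2))
    (by rw [Fintype.sum_prod_type, Fintype.sum_prod_type]
        simp only [← Finset.mul_sum, hsB, mul_one]
        exact le_of_eq rfl)
    (by intro x hx
        rcases mul_eq_zero.mp hx with h | h
        · have := le_marg hp x.1 x.2
          exact le_antisymm (h ▸ this) (hp x.1 x.2)
        · have : p x.1 x.2 ≤ pB x.2 := Finset.single_le_sum (fun a _ => hp a x.2) (Finset.mem_univ x.1)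
          exact le_antisymm (h ▸ this) (hp x.1 x.2))
  have split : ∑ x : α × β, p x.1 x.2 * Real.log (pA x.1 * pB x.2)
      = (∑ a, pA a * Real.log (pA a)) + ∑ b, pB b * Real.log (pB b) := by
    have hpt : ∀ x : α × β, p x.1 x.2 * Real.log (pA x.1 * pB x.2)
        = p x.1 x.2 * Real.log (pA x.1) + p x.1 x.2 * Real.log (pB x.2) := by
      intro x
      rcases eq_or_lt_of_le (hp x.1 x.2) with h0 | h0
      · simp [← h0]
      · have hA : 0 < pA x.1 := lt_of_lt_of_le h0 (le_marg hp x.1 x.2)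
        have hB : 0 < pB x.2 := lt_of_lt_of_le h0 (Finset.single_le_sum (fun a _ => hp a x.2) (Finset.mem_univ x.1))
        rw [Real.log_mul (ne_of_gt hA) (ne_of_gt hB)]; ring
    simp only [hpt]
    rw [Finset.sum_add_distrib]
    congr 1
    · rw [Fintype.sum_prod_type]
      refine Finset.sum_congr rfl fun a _ => ?_
      show (∑ b, p a b * Real.log (pA a)) = pA a * Real.log (pA a)
      rw [← Finset.sum_mul]
    · rw [Fintype.sum_prod_type, Finset.sum_comm]
      refine Finset.sum_congr rfl fun b _ => ?_
      show (∑ a, p a b * Real.log (pB b)) = pB b * Real.log (pB b)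
      rw [← Finset.sum_mul]
  rw [split] at key
  rw [ent_eq_neg, ent_eq_neg, ent_eq_neg]
  linarith

lemma sum3 (f : α × β × γ → ℝ) :
    ∑ x : α × β × γ, f x = ∑ a, ∑ b, ∑ c, f (a, b, c) := by
  rw [Fintype.sum_prod_type]
  refine Finset.sum_congr rfl fun a _ => ?_
  rw [Fintype.sum_prod_type]

lemma cmi (p : α → β → γ → ℝ) (hp : ∀ a b c, 0 ≤ p a b c)
    (hs : ∑ a, ∑ b, ∑ c, p a b c = 1) :
    ent (fun b => ∑ a, ∑ c, p a b c) + ent (fun x : α × β × γ => p x.1 x.2.1 x.2.2)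
      ≤ ent (fun x : α × β => ∑ c, p x.1 x.2 c) + ent (fun x : β × γ => ∑ a, p a x.1 x.2) := by
  classical
  set pB : β → ℝ := fun b => ∑ a, ∑ c, p a b c with hpB
  set pAB : α → β → ℝ := fun a b => ∑ c, p a b c with hpAB
  set pBC : β → γ → ℝ := fun b c => ∑ a, p a b c with hpBC
  have hABnn : ∀ a b, 0 ≤ pAB a b := fun a b => Finset.sum_nonneg fun c _ => hp a b c
  have hBCnn : ∀ b c, 0 ≤ pBC b c := fun b c => Finset.sum_nonneg fun a _ => hp a b c
  have hBnn : ∀ b, 0 ≤ pB b := fun b => Finset.sum_nonneg fun a _ => hABnn a b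
  have hw_le_AB : ∀ a b c, p a b c ≤ pAB a b := fun a b c =>
    Finset.single_le_sum (fun c' _ => hp a b c') (Finset.mem_univ c)
  have hw_le_BC : ∀ a b c, p a b c ≤ pBC b c := fun a b c =>
    Finset.single_le_sum (fun a' _ => hp a' b c) (Finset.mem_univ a)
  have hAB_le_B : ∀ a b, pAB a b ≤ pB b := fun a b =>
    Finset.single_le_sum (fun a' _ => hABnn a' b) (Finset.mem_univ a)
  have hsumAB : ∀ b, ∑ a, pAB a b = pB b := fun b => rfl
  have hsumBC : ∀ b, ∑ c, pBC b c = pB b := by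
    intro b
    simp only [hpBC, hpB]
    exact Finset.sum_comm
  set w : α × β × γ → ℝ := fun x => p x.1 x.2.1 x.2.2 with hwdef
  set r : α × β × γ → ℝ :=
    fun x => if pB x.2.1 = 0 then 0 else pAB x.1 x.2.1 * pBC x.2.1 x.2.2 / pB x.2.1 with hrdef
  have hwnn : ∀ x, 0 ≤ w x := fun x => hp _ _ _
  have hrnn : ∀ x, 0 ≤ r x := by
    intro x
    by_cases h : pB x.2.1 = 0
    · simp [hrdef, h]
    · simp only [hrdef, if_neg h]
      exact div_nonneg (mul_nonneg (hABnn _ _) (hBCnn _ _)) (hBnn _)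
  have h2 : ∀ b, ∑ a, ∑ c, r (a, b, c) = pB b := by
    intro b
    by_cases h : pB b = 0
    · simp [hrdef, h]
    · simp only [hrdef, if_neg h]
      have he : ∀ a : α, ∑ c, pAB a b * pBC b c / pB b = pAB a b * pB b / pB b := by
        intro a
        rw [← hsumBC b, Finset.mul_sum, Finset.sum_div]
      simp only [he]
      rw [← Finset.sum_div, ← Finset.sum_mul, hsumAB b]
      field_simp
  have hrsum : ∑ x, r x = ∑ x, w x :=
    calc ∑ x, r x = ∑ a, ∑ b, ∑ c, r (a, b, c) := sum3 r
      _ = ∑ b, ∑ a, ∑ c, r (a, b, c) := Finset.sum_comm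
      _ = ∑ b, pB b := Finset.sum_congr rfl fun b _ => h2 b
      _ = ∑ b, ∑ a, ∑ c, p a b c := rfl
      _ = ∑ a, ∑ b, ∑ c, p a b c := Finset.sum_comm
      _ = ∑ x, w x := (sum3 w).symm
  have hz : ∀ x, r x = 0 → w x = 0 := by
    intro x hx
    by_cases h : pB x.2.1 = 0
    · have : w x ≤ pB x.2.1 := le_trans (hw_le_AB _ _ _) (hAB_le_B _ _)
      exact le_antisymm (h ▸ this) (hwnn x)
    · rw [hrdef] at hx
      simp only [if_neg h] at hx
      rcases mul_eq_zero.mp ((div_eq_zero_iff.mp hx).resolve_right h) with h1 | h1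
      · exact le_antisymm (h1 ▸ hw_le_AB x.1 x.2.1 x.2.2) (hwnn x)
      · exact le_antisymm (h1 ▸ hw_le_BC x.1 x.2.1 x.2.2) (hwnn x)
  have key := gibbs w r hwnn hrnn (le_of_eq hrsum) hz
  have hpt : ∀ x, w x * Real.log (r x)
      = w x * Real.log (pAB x.1 x.2.1) + w x * Real.log (pBC x.2.1 x.2.2)
        - w x * Real.log (pB x.2.1) := by
    intro x
    rcases eq_or_lt_of_le (hwnn x) with h0 | h0
    · simp [← h0]
    · have hABp : 0 < pAB x.1 x.2.1 := lt_of_lt_of_le h0 (hw_le_AB _ _ _)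
      have hBCp : 0 < pBC x.2.1 x.2.2 := lt_of_lt_of_le h0 (hw_le_BC _ _ _)
      have hBp : 0 < pB x.2.1 := lt_of_lt_of_le hABp (hAB_le_B _ _)
      rw [hrdef]
      simp only [if_neg (ne_of_gt hBp)]
      rw [Real.log_div (by positivity) (ne_of_gt hBp), Real.log_mul (ne_of_gt hABp) (ne_of_gt hBCp)]
      ring
  have hsplit : ∑ x, w x * Real.log (r x)
      = (∑ y : α × β, pAB y.1 y.2 * Real.log (pAB y.1 y.2))
        + (∑ y : β × γ, pBC y.1 y.2 * Real.log (pBC y.1 y.2))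
        - ∑ b, pB b * Real.log (pB b) := by
    simp only [hpt]
    rw [Finset.sum_sub_distrib, Finset.sum_add_distrib]
    congr 1
    congr 1
    · calc ∑ x, w x * Real.log (pAB x.1 x.2.1)
          = ∑ a, ∑ b, ∑ c, p a b c * Real.log (pAB a b) :=
            sum3 (fun x => w x * Real.log (pAB x.1 x.2.1))
        _ = ∑ a, ∑ b, pAB a b * Real.log (pAB a b) := by
            refine Finset.sum_congr rfl fun a _ => Finset.sum_congr rfl fun b _ => ?_
            rw [← Finset.sum_mul]
        _ = ∑ y : α × β, pAB y.1 y.2 * Real.log (pAB y.1 y.2) := by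
            rw [Fintype.sum_prod_type]
    · calc ∑ x, w x * Real.log (pBC x.2.1 x.2.2)
          = ∑ a, ∑ b, ∑ c, p a b c * Real.log (pBC b c) :=
            sum3 (fun x => w x * Real.log (pBC x.2.1 x.2.2))
        _ = ∑ b, ∑ a, ∑ c, p a b c * Real.log (pBC b c) := Finset.sum_comm
        _ = ∑ b, ∑ c, ∑ a, p a b c * Real.log (pBC b c) :=
            Finset.sum_congr rfl fun b _ => Finset.sum_comm
        _ = ∑ b, ∑ c, pBC b c * Real.log (pBC b c) := by
            refine Finset.sum_congr rfl fun b _ => Finset.sum_congr rfl fun c _ => ?_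
            rw [← Finset.sum_mul]
        _ = ∑ y : β × γ, pBC y.1 y.2 * Real.log (pBC y.1 y.2) := by
            rw [Fintype.sum_prod_type]
    · calc ∑ x, w x * Real.log (pB x.2.1)
          = ∑ a, ∑ b, ∑ c, p a b c * Real.log (pB b) :=
            sum3 (fun x => w x * Real.log (pB x.2.1))
        _ = ∑ b, ∑ a, ∑ c, p a b c * Real.log (pB b) := Finset.sum_comm
        _ = ∑ b, pB b * Real.log (pB b) := by
            refine Finset.sum_congr rfl fun b _ => ?_
            have hst : ∀ a : α, ∑ c, p a b c * Real.log (pB b)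
                = (∑ c, p a b c) * Real.log (pB b) := fun a => by rw [← Finset.sum_mul]
            simp only [hst]
            rw [← Finset.sum_mul]
  rw [hsplit] at key
  have e1 : ent pB = -∑ b, pB b * Real.log (pB b) := ent_eq_neg _
  have e2 : ent w = -∑ x, w x * Real.log (w x) := ent_eq_neg _
  have e3 : ent (fun x : α × β => ∑ c, p x.1 x.2 c)
      = -∑ y : α × β, pAB y.1 y.2 * Real.log (pAB y.1 y.2) := by
    rw [ent_eq_neg]
  have e4 : ent (fun x : β × γ => ∑ a, p a x.1 x.2)
      = -∑ y : β × γ, pBC y.1 y.2 * Real.log (pBC y.1 y.2) := by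
    rw [ent_eq_neg]
  rw [e1, e2, e3, e4]
  linarith

end EntAux


section Channel
set_option linter.unusedSectionVars false
set_option maxHeartbeats 1000000
variable {q : ℕ} [Fact (Nat.Prime q)]

lemma qR_pos : (0:ℝ) < (q:ℝ) := by
  have h := (Fact.out (p := Nat.Prime q)).pos
  exact_mod_cast h

lemma qR_ne : ((q:ℝ)) ≠ 0 := ne_of_gt qR_pos

lemma log_q_pos : 0 < Real.log q := by
  have h := (Fact.out (p := Nat.Prime q)).one_lt
  exact Real.log_pos (by exact_mod_cast h)

lemma card_zmod : (Fintype.card (ZMod q) : ℝ) = (q : ℝ) := by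
  have := ZMod.card q
  exact_mod_cast this

lemma ent_unif1 : ent (fun _ : ZMod q => ((q:ℝ))⁻¹) = Real.log q := by
  rw [ent_const, card_zmod]
  rw [Real.negMulLog, Real.log_inv]
  have h := qR_ne (q := q)
  field_simp

lemma ent_unif2 : ent (fun _ : ZMod q × ZMod q => (((q:ℝ))^2)⁻¹) = 2 * Real.log q := by
  rw [ent_const]
  have hc : (Fintype.card (ZMod q × ZMod q) : ℝ) = (q:ℝ)^2 := by
    rw [Fintype.card_prod]
    push_cast [ZMod.card q]
    ring
  rw [hc, Real.negMulLog, Real.log_inv, Real.log_pow]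
  have h := qR_ne (q := q)
  field_simp
  push_cast
  ring

/-- marginal over the first input -/
noncomputable def Bf (M : MAC q) : ZMod q × M.Y → ℝ := fun s => ∑ x, M.P x s.1 s.2 / (q:ℝ)^2
/-- marginal over the second input -/
noncomputable def Df (M : MAC q) : ZMod q × M.Y → ℝ := fun s => ∑ w, M.P s.1 w s.2 / (q:ℝ)^2
/-- output marginal -/
noncomputable def Gf (M : MAC q) : M.Y → ℝ := fun y => ∑ x, ∑ w, M.P x w y / (q:ℝ)^2
/-- full joint -/
noncomputable def Cf (M : MAC q) : ZMod q × ZMod q × M.Y → ℝ :=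
  fun s => M.P s.1 s.2.1 s.2.2 / (q:ℝ)^2

lemma Hq_eq {α : Type*} [Fintype α] (p : α → ℝ) : Hq q p = ent p / Real.log q := by
  unfold Hq ent
  rw [Finset.sum_div]
  refine Finset.sum_congr rfl fun a _ => ?_
  rw [Real.negMulLog, Real.logb]
  ring

lemma MIq_mul_log {α β : Type*} [Fintype α] [Fintype β] (p : α → β → ℝ) :
    MIq q p * Real.log q
      = ent (fun a => ∑ b, p a b) + ent (fun b => ∑ a, p a b)
        - ent (fun ab : α × β => p ab.1 ab.2) := by
  unfold MIq
  rw [Hq_eq, Hq_eq, Hq_eq]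
  field_simp [ne_of_gt (log_q_pos (q := q))]

variable {M : MAC q}

lemma row_sum (hM : IsMAC M) (x w : ZMod q) : ∑ y, M.P x w y / (q:ℝ)^2 = ((q:ℝ)^2)⁻¹ := by
  rw [← Finset.sum_div, hM.2 x w]
  rw [one_div]

lemma I1_mul (hM : IsMAC M) :
    I1 q M * Real.log q = Real.log q + ent (Bf M) - ent (Cf M) := by
  unfold I1
  rw [MIq_mul_log]
  have hA : ent (fun x : ZMod q => ∑ b : ZMod q × M.Y, M.P x b.1 b.2 / (q:ℝ)^2)
      = Real.log q := by
    rw [ent_congr (g := fun _ : ZMod q => ((q:ℝ))⁻¹) ?_]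
    · exact ent_unif1
    · intro x
      rw [Fintype.sum_prod_type]
      simp only [row_sum hM]
      rw [Finset.sum_const, Finset.card_univ]
      rw [nsmul_eq_mul]
      rw [show ((Fintype.card (ZMod q) : ℝ)) = (q:ℝ) from card_zmod]
      rw [pow_two, mul_inv, ← mul_assoc, mul_inv_cancel₀ qR_ne, one_mul]
  rw [hA]
  rfl

lemma I2_mul (hM : IsMAC M) :
    I2 q M * Real.log q = Real.log q + ent (Df M) - ent (Cf M) := by
  unfold I2
  rw [MIq_mul_log]
  have hA : ent (fun w : ZMod q => ∑ b : ZMod q × M.Y, M.P b.1 w b.2 / (q:ℝ)^2)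
      = Real.log q := by
    rw [ent_congr (g := fun _ : ZMod q => ((q:ℝ))⁻¹) ?_]
    · exact ent_unif1
    · intro w
      rw [Fintype.sum_prod_type]
      simp only [row_sum hM]
      rw [Finset.sum_const, Finset.card_univ, nsmul_eq_mul,
        show ((Fintype.card (ZMod q) : ℝ)) = (q:ℝ) from card_zmod]
      rw [pow_two, mul_inv, ← mul_assoc, mul_inv_cancel₀ qR_ne, one_mul]
  rw [hA]
  have hC : ent (fun ab : ZMod q × (ZMod q × M.Y) => M.P ab.2.1 ab.1 ab.2.2 / (q:ℝ)^2)
      = ent (Cf M) := by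
    have := ent_comp_equiv (α := ZMod q × ZMod q × M.Y) (β := ZMod q × ZMod q × M.Y)
      ⟨fun s => (s.2.1, s.1, s.2.2), fun s => (s.2.1, s.1, s.2.2), fun s => rfl, fun s => rfl⟩
      (Cf M)
    exact this
  rw [hC]
  rfl

lemma I12_mul (hM : IsMAC M) :
    I12 q M * Real.log q = 2 * Real.log q + ent (Gf M) - ent (Cf M) := by
  unfold I12
  rw [MIq_mul_log]
  have hA : ent (fun xw : ZMod q × ZMod q => ∑ y, M.P xw.1 xw.2 y / (q:ℝ)^2)
      = 2 * Real.log q := by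
    rw [ent_congr (g := fun _ : ZMod q × ZMod q => (((q:ℝ))^2)⁻¹)
      (fun xw => row_sum hM xw.1 xw.2)]
    exact ent_unif2
  have hB : ent (fun y : M.Y => ∑ xw : ZMod q × ZMod q, M.P xw.1 xw.2 y / (q:ℝ)^2)
      = ent (Gf M) := by
    refine ent_congr fun y => ?_
    rw [Fintype.sum_prod_type]
    rfl
  have hC : ent (fun ab : (ZMod q × ZMod q) × M.Y => M.P ab.1.1 ab.1.2 ab.2 / (q:ℝ)^2)
      = ent (Cf M) := by
    have := ent_comp_equiv (α := (ZMod q × ZMod q) × M.Y) (β := ZMod q × ZMod q × M.Y)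
      ⟨fun s => (s.1.1, s.1.2, s.2), fun s => ((s.1, s.2.1), s.2.2), fun s => rfl, fun s => rfl⟩
      (Cf M)
    exact this
  rw [hA, hB, hC]

lemma margX (hM : IsMAC M) (x : ZMod q) :
    ∑ s : ZMod q × M.Y, M.P x s.1 s.2 / (q:ℝ)^2 = (q:ℝ)⁻¹ := by
  rw [Fintype.sum_prod_type]
  simp only [row_sum hM]
  rw [Finset.sum_const, Finset.card_univ, nsmul_eq_mul,
    show ((Fintype.card (ZMod q) : ℝ)) = (q:ℝ) from card_zmod]
  rw [pow_two, mul_inv, ← mul_assoc, mul_inv_cancel₀ qR_ne, one_mul]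

lemma margW (hM : IsMAC M) (w : ZMod q) :
    ∑ s : ZMod q × M.Y, M.P s.1 w s.2 / (q:ℝ)^2 = (q:ℝ)⁻¹ := by
  rw [Fintype.sum_prod_type]
  simp only [row_sum hM]
  rw [Finset.sum_const, Finset.card_univ, nsmul_eq_mul,
    show ((Fintype.card (ZMod q) : ℝ)) = (q:ℝ) from card_zmod]
  rw [pow_two, mul_inv, ← mul_assoc, mul_inv_cancel₀ qR_ne, one_mul]

lemma sum_inv_q : ∑ _x : ZMod q, ((q:ℝ))⁻¹ = 1 := by
  rw [Finset.sum_const, Finset.card_univ, nsmul_eq_mul,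
    show ((Fintype.card (ZMod q) : ℝ)) = (q:ℝ) from card_zmod]
  exact mul_inv_cancel₀ qR_ne

lemma jm_nonneg (hM : IsMAC M) (x w : ZMod q) (y : M.Y) : 0 ≤ M.P x w y / (q:ℝ)^2 :=
  div_nonneg (hM.1 x w y) (by positivity)

lemma sum_Bf (hM : IsMAC M) : ∑ s : ZMod q × M.Y, Bf M s = 1 := by
  have h : ∀ s : ZMod q × M.Y, Bf M s = ∑ x, M.P x s.1 s.2 / (q:ℝ)^2 := fun s => rfl
  simp only [h]
  rw [Finset.sum_comm]
  rw [show (∑ x : ZMod q, ∑ s : ZMod q × M.Y, M.P x s.1 s.2 / (q:ℝ)^2)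
      = ∑ x : ZMod q, ((q:ℝ))⁻¹ from Finset.sum_congr rfl fun x _ => margX hM x]
  exact sum_inv_q

lemma sum_Df (hM : IsMAC M) : ∑ s : ZMod q × M.Y, Df M s = 1 := by
  have h : ∀ s : ZMod q × M.Y, Df M s = ∑ w, M.P s.1 w s.2 / (q:ℝ)^2 := fun s => rfl
  simp only [h]
  rw [Fintype.sum_prod_type]
  have h2 : ∀ x : ZMod q, ∑ y, ∑ w, M.P x w y / (q:ℝ)^2 = ((q:ℝ))⁻¹ := by
    intro x
    rw [Finset.sum_comm]
    simp only [row_sum hM]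
    rw [Finset.sum_const, Finset.card_univ, nsmul_eq_mul,
      show ((Fintype.card (ZMod q) : ℝ)) = (q:ℝ) from card_zmod]
    rw [pow_two, mul_inv, ← mul_assoc, mul_inv_cancel₀ qR_ne, one_mul]
  simp only [h2]
  exact sum_inv_q

lemma sum_Gf (hM : IsMAC M) : ∑ y, Gf M y = 1 := by
  unfold Gf
  rw [Finset.sum_comm]
  have h2 : ∀ x : ZMod q, ∑ y, ∑ w, M.P x w y / (q:ℝ)^2 = ((q:ℝ))⁻¹ := by
    intro x
    rw [Finset.sum_comm]
    simp only [row_sum hM]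
    rw [Finset.sum_const, Finset.card_univ, nsmul_eq_mul,
      show ((Fintype.card (ZMod q) : ℝ)) = (q:ℝ) from card_zmod]
    rw [pow_two, mul_inv, ← mul_assoc, mul_inv_cancel₀ qR_ne, one_mul]
  simp only [h2]
  exact sum_inv_q

lemma sum_Cf (hM : IsMAC M) : ∑ s : ZMod q × ZMod q × M.Y, Cf M s = 1 := by
  rw [sum3 (Cf M)]
  have h2 : ∀ x w : ZMod q, ∑ y, Cf M (x, w, y) = ((q:ℝ)^2)⁻¹ := fun x w => row_sum hM x w
  simp only [h2]
  rw [Finset.sum_const, Finset.card_univ, nsmul_eq_mul,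
    show ((Fintype.card (ZMod q) : ℝ)) = (q:ℝ) from card_zmod]
  simp only [Finset.sum_const, Finset.card_univ, nsmul_eq_mul,
    show ((Fintype.card (ZMod q) : ℝ)) = (q:ℝ) from card_zmod]
  have := qR_ne (q := q)
  field_simp

lemma entCf_le_I1 (hM : IsMAC M) : ent (Cf M) ≤ Real.log q + ent (Bf M) := by
  have h := subadd (fun (x : ZMod q) (s : ZMod q × M.Y) => M.P x s.1 s.2 / (q:ℝ)^2)
    (fun x s => jm_nonneg hM x s.1 s.2)
    (by simp only [margX hM]; exact sum_inv_q)
  have e1 : ent (fun z : ZMod q × ZMod q × M.Y =>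
      M.P z.1 z.2.1 z.2.2 / (q:ℝ)^2) = ent (Cf M) := ent_congr fun z => rfl
  have e2 : ent (fun x : ZMod q => ∑ s : ZMod q × M.Y, M.P x s.1 s.2 / (q:ℝ)^2)
      = Real.log q := by
    rw [ent_congr (g := fun _ : ZMod q => ((q:ℝ))⁻¹) (margX hM)]
    exact ent_unif1
  have e3 : ent (fun s : ZMod q × M.Y => ∑ x, M.P x s.1 s.2 / (q:ℝ)^2) = ent (Bf M) :=
    ent_congr fun s => rfl
  calc ent (Cf M) = ent (fun z : ZMod q × ZMod q × M.Y => M.P z.1 z.2.1 z.2.2 / (q:ℝ)^2) :=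
        e1.symm
    _ ≤ _ := h
    _ = Real.log q + ent (Bf M) := by rw [e2, e3]

lemma entCf_le_I2 (hM : IsMAC M) : ent (Cf M) ≤ Real.log q + ent (Df M) := by
  have h := subadd (fun (w : ZMod q) (s : ZMod q × M.Y) => M.P s.1 w s.2 / (q:ℝ)^2)
    (fun w s => jm_nonneg hM s.1 w s.2)
    (by simp only [margW hM]; exact sum_inv_q)
  have e1 : ent (fun z : ZMod q × ZMod q × M.Y =>
      M.P z.2.1 z.1 z.2.2 / (q:ℝ)^2) = ent (Cf M) :=
    ent_comp_equiv ⟨fun s : ZMod q × ZMod q × M.Y => (s.2.1, s.1, s.2.2),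
      fun s => (s.2.1, s.1, s.2.2), fun s => rfl, fun s => rfl⟩ (Cf M)
  have e2 : ent (fun w : ZMod q => ∑ s : ZMod q × M.Y, M.P s.1 w s.2 / (q:ℝ)^2)
      = Real.log q := by
    rw [ent_congr (g := fun _ : ZMod q => ((q:ℝ))⁻¹) (margW hM)]
    exact ent_unif1
  have e3 : ent (fun s : ZMod q × M.Y => ∑ w, M.P s.1 w s.2 / (q:ℝ)^2) = ent (Df M) :=
    ent_congr fun s => rfl
  calc ent (Cf M) = ent (fun z : ZMod q × ZMod q × M.Y => M.P z.2.1 z.1 z.2.2 / (q:ℝ)^2) :=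
        e1.symm
    _ ≤ _ := h
    _ = Real.log q + ent (Df M) := by rw [e2, e3]

lemma entCf_le_I12 (hM : IsMAC M) : ent (Cf M) ≤ 2 * Real.log q + ent (Gf M) := by
  have h := subadd (fun (xw : ZMod q × ZMod q) (y : M.Y) => M.P xw.1 xw.2 y / (q:ℝ)^2)
    (fun xw y => jm_nonneg hM xw.1 xw.2 y)
    (by
      rw [Fintype.sum_prod_type]
      simp only [row_sum hM]
      rw [Finset.sum_const, Finset.card_univ, nsmul_eq_mul,
        show ((Fintype.card (ZMod q) : ℝ)) = (q:ℝ) from card_zmod]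
      simp only [Finset.sum_const, Finset.card_univ, nsmul_eq_mul,
        show ((Fintype.card (ZMod q) : ℝ)) = (q:ℝ) from card_zmod]
      have := qR_ne (q := q)
      field_simp)
  have e1 : ent (fun z : (ZMod q × ZMod q) × M.Y =>
      M.P z.1.1 z.1.2 z.2 / (q:ℝ)^2) = ent (Cf M) :=
    ent_comp_equiv ⟨fun s : (ZMod q × ZMod q) × M.Y => (s.1.1, s.1.2, s.2),
      fun s => ((s.1, s.2.1), s.2.2), fun s => rfl, fun s => rfl⟩ (Cf M)
  have e2 : ent (fun xw : ZMod q × ZMod q => ∑ y, M.P xw.1 xw.2 y / (q:ℝ)^2)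
      = 2 * Real.log q := by
    rw [ent_congr (g := fun _ : ZMod q × ZMod q => (((q:ℝ))^2)⁻¹)
      (fun xw => row_sum hM xw.1 xw.2)]
    exact ent_unif2
  have e3 : ent (fun y : M.Y => ∑ xw : ZMod q × ZMod q, M.P xw.1 xw.2 y / (q:ℝ)^2)
      = ent (Gf M) := by
    refine ent_congr fun y => ?_
    rw [Fintype.sum_prod_type]
    rfl
  calc ent (Cf M) = _ := e1.symm
    _ ≤ _ := h
    _ = 2 * Real.log q + ent (Gf M) := by rw [e2, e3]

lemma entBf_le (hM : IsMAC M) : ent (Bf M) ≤ Real.log q + ent (Gf M) := by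
  have hmargA : ∀ w : ZMod q, ∑ y, Bf M (w, y) = (q:ℝ)⁻¹ := by
    intro w
    have : ∀ y, Bf M (w, y) = ∑ x, M.P x w y / (q:ℝ)^2 := fun y => rfl
    simp only [this]
    rw [Finset.sum_comm]
    simp only [row_sum hM]
    rw [Finset.sum_const, Finset.card_univ, nsmul_eq_mul,
      show ((Fintype.card (ZMod q) : ℝ)) = (q:ℝ) from card_zmod]
    rw [pow_two, mul_inv, ← mul_assoc, mul_inv_cancel₀ qR_ne, one_mul]
  have h := subadd (fun (w : ZMod q) (y : M.Y) => Bf M (w, y))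
    (fun w y => Finset.sum_nonneg fun x _ => jm_nonneg hM x w y)
    (by simp only [hmargA]; exact sum_inv_q)
  have e1 : ent (fun s : ZMod q × M.Y => Bf M (s.1, s.2)) = ent (Bf M) :=
    ent_congr fun s => rfl
  have e2 : ent (fun w : ZMod q => ∑ y, Bf M (w, y)) = Real.log q := by
    rw [ent_congr (g := fun _ : ZMod q => ((q:ℝ))⁻¹) hmargA]
    exact ent_unif1
  have e3 : ent (fun y : M.Y => ∑ w, Bf M (w, y)) = ent (Gf M) := by
    refine ent_congr fun y => ?_
    unfold Bf Gf
    exact Finset.sum_comm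
  calc ent (Bf M) = ent (fun s : ZMod q × M.Y => Bf M (s.1, s.2)) := e1.symm
    _ ≤ _ := h
    _ = Real.log q + ent (Gf M) := by rw [e2, e3]

lemma ent_submod (hM : IsMAC M) :
    ent (Gf M) + ent (Cf M) ≤ ent (Df M) + ent (Bf M) := by
  have h := cmi (fun (x : ZMod q) (y : M.Y) (w : ZMod q) => M.P x w y / (q:ℝ)^2)
    (fun x y w => jm_nonneg hM x w y)
    (by
      have : ∀ x : ZMod q, ∑ y : M.Y, ∑ w : ZMod q, M.P x w y / (q:ℝ)^2
          = ∑ s : ZMod q × M.Y, M.P x s.1 s.2 / (q:ℝ)^2 := by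
        intro x
        rw [Fintype.sum_prod_type]
        exact Finset.sum_comm
      simp only [this, margX hM]
      exact sum_inv_q)
  have e1 : ent (fun y : M.Y => ∑ x : ZMod q, ∑ w : ZMod q, M.P x w y / (q:ℝ)^2)
      = ent (Gf M) := ent_congr fun y => rfl
  have e2 : ent (fun z : ZMod q × M.Y × ZMod q => M.P z.1 z.2.2 z.2.1 / (q:ℝ)^2)
      = ent (Cf M) :=
    ent_comp_equiv ⟨fun s : ZMod q × M.Y × ZMod q => (s.1, s.2.2, s.2.1),
      fun s : ZMod q × ZMod q × M.Y => (s.1, s.2.2, s.2.1), fun s => rfl, fun s => rfl⟩ (Cf M)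
  have e3 : ent (fun z : ZMod q × M.Y => ∑ w, M.P z.1 w z.2 / (q:ℝ)^2) = ent (Df M) :=
    ent_congr fun z => rfl
  have e4 : ent (fun z : M.Y × ZMod q => ∑ x, M.P x z.2 z.1 / (q:ℝ)^2) = ent (Bf M) :=
    ent_comp_equiv ⟨fun z : M.Y × ZMod q => (z.2, z.1),
      fun z : ZMod q × M.Y => (z.2, z.1), fun z => rfl, fun z => rfl⟩ (Bf M)
  rw [e1, e2, e3, e4] at h
  exact h

lemma I1_nonneg (hM : IsMAC M) : 0 ≤ I1 q M := by
  nlinarith [I1_mul hM, entCf_le_I1 hM, log_q_pos (q := q)]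

lemma I2_nonneg (hM : IsMAC M) : 0 ≤ I2 q M := by
  nlinarith [I2_mul hM, entCf_le_I2 hM, log_q_pos (q := q)]

lemma I12_nonneg (hM : IsMAC M) : 0 ≤ I12 q M := by
  nlinarith [I12_mul hM, entCf_le_I12 hM, log_q_pos (q := q)]

lemma I1_le_I12 (hM : IsMAC M) : I1 q M ≤ I12 q M := by
  nlinarith [I1_mul hM, I12_mul hM, entBf_le hM, log_q_pos (q := q)]

lemma I12_le_I1_add_I2 (hM : IsMAC M) : I12 q M ≤ I1 q M + I2 q M := by
  nlinarith [I1_mul hM, I2_mul hM, I12_mul hM, ent_submod hM, log_q_pos (q := q)]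

lemma isMAC_minusT (hM : IsMAC M) : IsMAC (minusT q M) := by
  constructor
  · intro u1 v1 y
    exact mul_nonneg (by positivity)
      (Finset.sum_nonneg fun u2 _ => Finset.sum_nonneg fun v2 _ =>
        mul_nonneg (hM.1 _ _ _) (hM.1 _ _ _))
  · intro u1 v1
    show ∑ y : M.Y × M.Y, ((q:ℝ)^2)⁻¹ * ∑ u2, ∑ v2,
      M.P (u1 + u2) (v1 + v2) y.1 * M.P u2 v2 y.2 = 1
    rw [← Finset.mul_sum]
    have h1 : ∑ y : M.Y × M.Y, ∑ u2, ∑ v2, M.P (u1 + u2) (v1 + v2) y.1 * M.P u2 v2 y.2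
        = ∑ u2 : ZMod q, ∑ v2 : ZMod q, ∑ y : M.Y × M.Y,
            M.P (u1 + u2) (v1 + v2) y.1 * M.P u2 v2 y.2 := by
      rw [Finset.sum_comm]
      exact Finset.sum_congr rfl fun u2 _ => Finset.sum_comm
    rw [h1]
    have h2 : ∀ u2 v2 : ZMod q, ∑ y : M.Y × M.Y,
        M.P (u1 + u2) (v1 + v2) y.1 * M.P u2 v2 y.2 = 1 := by
      intro u2 v2
      rw [Fintype.sum_prod_type]
      have : ∀ y1, ∑ y2, M.P (u1 + u2) (v1 + v2) y1 * M.P u2 v2 y2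
          = M.P (u1 + u2) (v1 + v2) y1 := by
        intro y1
        rw [← Finset.mul_sum, hM.2, mul_one]
      simp only [this]
      exact hM.2 _ _
    simp only [h2]
    rw [Finset.sum_const, Finset.card_univ, nsmul_eq_mul,
      show ((Fintype.card (ZMod q) : ℝ)) = (q:ℝ) from card_zmod]
    simp only [Finset.sum_const, Finset.card_univ, nsmul_eq_mul, mul_one,
      show ((Fintype.card (ZMod q) : ℝ)) = (q:ℝ) from card_zmod]
    have := qR_ne (q := q)
    field_simp

lemma isMAC_plusT (hM : IsMAC M) : IsMAC (plusT q M) := by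
  constructor
  · intro u2 v2 z
    exact mul_nonneg (by positivity) (mul_nonneg (hM.1 _ _ _) (hM.1 _ _ _))
  · intro u2 v2
    show ∑ z : (M.Y × M.Y) × ZMod q × ZMod q, ((q:ℝ)^2)⁻¹ *
      (M.P (z.2.1 + u2) (z.2.2 + v2) z.1.1 * M.P u2 v2 z.1.2) = 1
    rw [← Finset.mul_sum]
    have h1 : ∑ z : (M.Y × M.Y) × ZMod q × ZMod q,
        M.P (z.2.1 + u2) (z.2.2 + v2) z.1.1 * M.P u2 v2 z.1.2
        = ∑ uv : ZMod q × ZMod q, ∑ y : M.Y × M.Y,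
            M.P (uv.1 + u2) (uv.2 + v2) y.1 * M.P u2 v2 y.2 := by
      rw [Fintype.sum_prod_type, Finset.sum_comm]
    rw [h1]
    have h2 : ∀ uv : ZMod q × ZMod q, ∑ y : M.Y × M.Y,
        M.P (uv.1 + u2) (uv.2 + v2) y.1 * M.P u2 v2 y.2 = 1 := by
      intro uv
      rw [Fintype.sum_prod_type]
      have : ∀ y1, ∑ y2, M.P (uv.1 + u2) (uv.2 + v2) y1 * M.P u2 v2 y2
          = M.P (uv.1 + u2) (uv.2 + v2) y1 := by
        intro y1
        rw [← Finset.mul_sum, hM.2, mul_one]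
      simp only [this]
      exact hM.2 _ _
    simp only [h2]
    rw [Finset.sum_const, Finset.card_univ, nsmul_eq_mul, mul_one,
      show ((Fintype.card (ZMod q × ZMod q) : ℝ)) = (q:ℝ)^2 from by
        rw [Fintype.card_prod]; push_cast [ZMod.card q]; ring]
    exact inv_mul_cancel₀ (pow_ne_zero 2 qR_ne)

lemma sum_shift (f : ZMod q → ℝ) (t : ZMod q) : ∑ u, f (u + t) = ∑ u, f u :=
  Fintype.sum_equiv (Equiv.addRight t) _ _ (fun u => rfl)

lemma scl (a b : ℝ) :
    ((q:ℝ)^2)⁻¹ * (a * b) / (q:ℝ)^2 = a / (q:ℝ)^2 * (b / (q:ℝ)^2) := by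
  have := qR_ne (q := q)
  field_simp

/-- master joint pmf of the two-copy construction -/
noncomputable def mj (M : MAC q) (u1 u2 v1 v2 : ZMod q) (y1 y2 : M.Y) : ℝ :=
  Cf M (u1 + u2, (v1 + v2, y1)) * Cf M (u2, (v2, y2))

lemma Cf_nonneg (hM : IsMAC M) (s : ZMod q × ZMod q × M.Y) : 0 ≤ Cf M s :=
  jm_nonneg hM s.1 s.2.1 s.2.2

lemma mj_nonneg (hM : IsMAC M) (u1 u2 v1 v2 : ZMod q) (y1 y2 : M.Y) :
    0 ≤ mj M u1 u2 v1 v2 y1 y2 :=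
  mul_nonneg (Cf_nonneg hM _) (Cf_nonneg hM _)

lemma m1 (u1 v1 : ZMod q) (yy : M.Y × M.Y) :
    Cf (minusT q M) (u1, (v1, yy)) = ∑ u2, ∑ v2, mj M u1 u2 v1 v2 yy.1 yy.2 := by
  show ((q:ℝ)^2)⁻¹ * (∑ u2, ∑ v2, M.P (u1 + u2) (v1 + v2) yy.1 * M.P u2 v2 yy.2) / (q:ℝ)^2 = _
  simp only [Finset.mul_sum, Finset.sum_div]
  exact Finset.sum_congr rfl fun u2 _ => Finset.sum_congr rfl fun v2 _ => scl _ _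

lemma m2 (u1 u2 v1 v2 : ZMod q) (y1 y2 : M.Y) :
    Cf (plusT q M) (u2, (v2, ((y1, y2), (u1, v1)))) = mj M u1 u2 v1 v2 y1 y2 := by
  show ((q:ℝ)^2)⁻¹ * (M.P (u1 + u2) (v1 + v2) y1 * M.P u2 v2 y2) / (q:ℝ)^2 = _
  exact scl _ _

lemma ma (u2 v1 v2 : ZMod q) (y1 y2 : M.Y) :
    ∑ u1, mj M u1 u2 v1 v2 y1 y2 = Bf M (v1 + v2, y1) * Cf M (u2, (v2, y2)) := by
  unfold mj
  rw [← Finset.sum_mul]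
  congr 1
  exact sum_shift (fun x => Cf M (x, (v1 + v2, y1))) u2

lemma mb (u1 u2 v2 : ZMod q) (y1 y2 : M.Y) :
    ∑ v1, mj M u1 u2 v1 v2 y1 y2 = Df M (u1 + u2, y1) * Cf M (u2, (v2, y2)) := by
  unfold mj
  rw [← Finset.sum_mul]
  congr 1
  exact sum_shift (fun w => Cf M (u1 + u2, (w, y1))) v2

lemma mc (u2 v2 : ZMod q) (y1 y2 : M.Y) :
    ∑ u1, ∑ v1, mj M u1 u2 v1 v2 y1 y2 = Gf M y1 * Cf M (u2, (v2, y2)) := by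
  have h1 : ∀ u1, ∑ v1, mj M u1 u2 v1 v2 y1 y2
      = Df M (u1 + u2, y1) * Cf M (u2, (v2, y2)) := fun u1 => mb u1 u2 v2 y1 y2
  simp only [h1]
  rw [← Finset.sum_mul]
  congr 1
  rw [sum_shift (fun x => Df M (x, y1)) u2]
  rfl

lemma sum_Cf_first (v2 : ZMod q) (y2 : M.Y) :
    ∑ u2, Cf M (u2, (v2, y2)) = Bf M (v2, y2) := rfl

lemma sum_Cf_second (u2 : ZMod q) (y2 : M.Y) :
    ∑ v2, Cf M (u2, (v2, y2)) = Df M (u2, y2) := rfl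

lemma F1_ent (hM : IsMAC M) :
    ent (Bf (minusT q M)) + ent (Bf (plusT q M))
      ≤ ent (Cf (minusT q M)) + (ent (Bf M) + ent (Bf M)) := by
  set p1 : ZMod q → (ZMod q × M.Y × M.Y) → ZMod q → ℝ :=
    fun u1 b v2 => ∑ u2, mj M u1 u2 b.1 v2 b.2.1 b.2.2 with hp1
  have hp1nn : ∀ a b c, 0 ≤ p1 a b c := fun a b c =>
    Finset.sum_nonneg fun u2 _ => mj_nonneg hM _ _ _ _ _ _
  have hpAB : ∀ a (b : ZMod q × M.Y × M.Y), ∑ c, p1 a b c = Cf (minusT q M) (a, b) := by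
    intro a b
    obtain ⟨v1, yy⟩ := b
    exact Finset.sum_comm.trans (m1 a v1 yy).symm
  have hs : ∑ a, ∑ b : ZMod q × M.Y × M.Y, ∑ c, p1 a b c = 1 := by
    simp only [hpAB]
    exact (Fintype.sum_prod_type (Cf (minusT q M))).symm.trans (sum_Cf (isMAC_minusT hM))
  have key := cmi p1 hp1nn hs
  -- identify the four entropies
  have eB : ent (fun b : ZMod q × M.Y × M.Y => ∑ a, ∑ c, p1 a b c)
      = ent (Bf (minusT q M)) := by
    refine ent_congr fun b => ?_
    have : ∀ a, ∑ c, p1 a b c = Cf (minusT q M) (a, b) := fun a => hpAB a b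
    calc ∑ a, ∑ c, p1 a b c = ∑ a, Cf (minusT q M) (a, b) :=
          Finset.sum_congr rfl fun a _ => this a
      _ = Bf (minusT q M) b := rfl
  have eABC : ent (fun x : ZMod q × (ZMod q × M.Y × M.Y) × ZMod q =>
      p1 x.1 x.2.1 x.2.2) = ent (Bf (plusT q M)) := by
    have he := ent_comp_equiv
      (⟨fun x : ZMod q × (ZMod q × M.Y × M.Y) × ZMod q =>
          (x.2.2, ((x.2.1.2.1, x.2.1.2.2), (x.1, x.2.1.1))),
        fun z : ZMod q × ((M.Y × M.Y) × ZMod q × ZMod q) =>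
          (z.2.2.1, ((z.2.2.2, z.2.1.1, z.2.1.2), z.1)),
        fun x => rfl, fun z => rfl⟩)
      (Bf (plusT q M))
    refine Eq.trans ?_ he
    refine ent_congr fun x => ?_
    show p1 x.1 x.2.1 x.2.2
      = ∑ u2, (plusT q M).P u2 x.2.2 ((x.2.1.2.1, x.2.1.2.2), (x.1, x.2.1.1)) / (q:ℝ)^2
    rw [hp1]
    exact Finset.sum_congr rfl fun u2 _ =>
      (m2 x.1 u2 x.2.1.1 x.2.2 x.2.1.2.1 x.2.1.2.2).symm
  have eAB : ent (fun x : ZMod q × (ZMod q × M.Y × M.Y) => ∑ c, p1 x.1 x.2 c)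
      = ent (Cf (minusT q M)) := by
    refine ent_congr fun x => ?_
    exact hpAB x.1 x.2
  have eBC : ent (fun x : (ZMod q × M.Y × M.Y) × ZMod q => ∑ a, p1 a x.1 x.2)
      = ent (Bf M) + ent (Bf M) := by
    have hpt : ∀ x : (ZMod q × M.Y × M.Y) × ZMod q, ∑ a, p1 a x.1 x.2
        = Bf M (x.1.1 + x.2, x.1.2.1) * Bf M (x.2, x.1.2.2) := by
      intro x
      rw [hp1]
      calc ∑ a, ∑ u2, mj M a u2 x.1.1 x.2 x.1.2.1 x.1.2.2
          = ∑ u2, ∑ a, mj M a u2 x.1.1 x.2 x.1.2.1 x.1.2.2 := Finset.sum_comm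
        _ = ∑ u2, Bf M (x.1.1 + x.2, x.1.2.1) * Cf M (u2, (x.2, x.1.2.2)) :=
            Finset.sum_congr rfl fun u2 _ => ma u2 x.1.1 x.2 x.1.2.1 x.1.2.2
        _ = Bf M (x.1.1 + x.2, x.1.2.1) * ∑ u2, Cf M (u2, (x.2, x.1.2.2)) := by
            rw [Finset.mul_sum]
        _ = _ := by rw [sum_Cf_first]
    rw [ent_congr hpt]
    have he := ent_comp_equiv
      (⟨fun x : (ZMod q × M.Y × M.Y) × ZMod q =>
          ((x.1.1 + x.2, x.1.2.1), (x.2, x.1.2.2)),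
        fun z : (ZMod q × M.Y) × ZMod q × M.Y =>
          ((z.1.1 - z.2.1, z.1.2, z.2.2), z.2.1),
        fun x => by
          obtain ⟨⟨v1, y1, y2⟩, v2⟩ := x
          simp,
        fun z => by
          obtain ⟨⟨a, y1⟩, v2, y2⟩ := z
          simp⟩)
      (fun z : (ZMod q × M.Y) × ZMod q × M.Y => Bf M z.1 * Bf M z.2)
    rw [← ent_prod_mul (Bf M) (Bf M) (sum_Bf hM) (sum_Bf hM)]
    rw [← he]
    refine ent_congr fun x => ?_
    rfl
  rw [eB, eABC, eAB, eBC] at key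
  exact key

lemma F2_ent (hM : IsMAC M) :
    ent (Df (minusT q M)) + ent (Df (plusT q M))
      ≤ ent (Cf (minusT q M)) + (ent (Df M) + ent (Df M)) := by
  set p2 : ZMod q → (ZMod q × M.Y × M.Y) → ZMod q → ℝ :=
    fun v1 b u2 => ∑ v2, mj M b.1 u2 v1 v2 b.2.1 b.2.2 with hp2
  have hp2nn : ∀ a b c, 0 ≤ p2 a b c := fun a b c =>
    Finset.sum_nonneg fun v2 _ => mj_nonneg hM _ _ _ _ _ _
  have hpAB : ∀ a (b : ZMod q × M.Y × M.Y), ∑ c, p2 a b c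
      = Cf (minusT q M) (b.1, (a, (b.2.1, b.2.2))) := by
    intro a b
    obtain ⟨u1, yy⟩ := b
    exact (m1 u1 a yy).symm
  have hs : ∑ a, ∑ b : ZMod q × M.Y × M.Y, ∑ c, p2 a b c = 1 := by
    simp only [hpAB]
    calc ∑ a : ZMod q, ∑ b : ZMod q × M.Y × M.Y,
          Cf (minusT q M) (b.1, (a, (b.2.1, b.2.2)))
        = ∑ b : ZMod q × M.Y × M.Y, ∑ a : ZMod q,
            Cf (minusT q M) (b.1, (a, (b.2.1, b.2.2))) := Finset.sum_comm
      _ = ∑ u1 : ZMod q, ∑ t : M.Y × M.Y, ∑ a : ZMod q,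
            Cf (minusT q M) (u1, (a, (t.1, t.2))) := by rw [Fintype.sum_prod_type]
      _ = ∑ u1 : ZMod q, ∑ a : ZMod q, ∑ t : M.Y × M.Y,
            Cf (minusT q M) (u1, (a, (t.1, t.2))) :=
          Finset.sum_congr rfl fun u1 _ => Finset.sum_comm
      _ = ∑ u1 : ZMod q, ∑ a : ZMod q, ∑ t : M.Y × M.Y,
            Cf (minusT q M) (u1, (a, t)) :=
          Finset.sum_congr rfl fun u1 _ => Finset.sum_congr rfl fun a _ =>
            Finset.sum_congr rfl fun t _ => rfl
      _ = ∑ s : ZMod q × ZMod q × (M.Y × M.Y), Cf (minusT q M) s :=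
          (sum3 (Cf (minusT q M))).symm
      _ = 1 := sum_Cf (isMAC_minusT hM)
  have key := cmi p2 hp2nn hs
  have eB : ent (fun b : ZMod q × M.Y × M.Y => ∑ a, ∑ c, p2 a b c)
      = ent (Df (minusT q M)) := by
    refine ent_congr fun b => ?_
    calc ∑ a, ∑ c, p2 a b c
        = ∑ a, Cf (minusT q M) (b.1, (a, (b.2.1, b.2.2))) :=
          Finset.sum_congr rfl fun a _ => hpAB a b
      _ = Df (minusT q M) b := rfl
  have eABC : ent (fun x : ZMod q × (ZMod q × M.Y × M.Y) × ZMod q =>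
      p2 x.1 x.2.1 x.2.2) = ent (Df (plusT q M)) := by
    have he := ent_comp_equiv
      (⟨fun x : ZMod q × (ZMod q × M.Y × M.Y) × ZMod q =>
          (x.2.2, ((x.2.1.2.1, x.2.1.2.2), (x.2.1.1, x.1))),
        fun z : ZMod q × ((M.Y × M.Y) × ZMod q × ZMod q) =>
          (z.2.2.2, ((z.2.2.1, z.2.1.1, z.2.1.2), z.1)),
        fun x => rfl, fun z => rfl⟩)
      (Df (plusT q M))
    refine Eq.trans ?_ he
    refine ent_congr fun x => ?_
    show p2 x.1 x.2.1 x.2.2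
      = ∑ v2, (plusT q M).P x.2.2 v2 ((x.2.1.2.1, x.2.1.2.2), (x.2.1.1, x.1)) / (q:ℝ)^2
    rw [hp2]
    exact Finset.sum_congr rfl fun v2 _ =>
      (m2 x.2.1.1 x.2.2 x.1 v2 x.2.1.2.1 x.2.1.2.2).symm
  have eAB : ent (fun x : ZMod q × (ZMod q × M.Y × M.Y) => ∑ c, p2 x.1 x.2 c)
      = ent (Cf (minusT q M)) := by
    have he := ent_comp_equiv
      (⟨fun x : ZMod q × (ZMod q × M.Y × M.Y) => (x.2.1, (x.1, x.2.2)),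
        fun s : ZMod q × ZMod q × (M.Y × M.Y) => (s.2.1, (s.1, s.2.2)),
        fun x => rfl, fun s => rfl⟩)
      (Cf (minusT q M))
    refine Eq.trans ?_ he
    exact ent_congr fun x => hpAB x.1 x.2
  have eBC : ent (fun x : (ZMod q × M.Y × M.Y) × ZMod q => ∑ a, p2 a x.1 x.2)
      = ent (Df M) + ent (Df M) := by
    have hpt : ∀ x : (ZMod q × M.Y × M.Y) × ZMod q, ∑ a, p2 a x.1 x.2
        = Df M (x.1.1 + x.2, x.1.2.1) * Df M (x.2, x.1.2.2) := by
      intro x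
      rw [hp2]
      calc ∑ a, ∑ v2, mj M x.1.1 x.2 a v2 x.1.2.1 x.1.2.2
          = ∑ v2, ∑ a, mj M x.1.1 x.2 a v2 x.1.2.1 x.1.2.2 := Finset.sum_comm
        _ = ∑ v2, Df M (x.1.1 + x.2, x.1.2.1) * Cf M (x.2, (v2, x.1.2.2)) :=
            Finset.sum_congr rfl fun v2 _ => mb x.1.1 x.2 v2 x.1.2.1 x.1.2.2
        _ = Df M (x.1.1 + x.2, x.1.2.1) * ∑ v2, Cf M (x.2, (v2, x.1.2.2)) := by
            rw [Finset.mul_sum]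
        _ = _ := by rw [sum_Cf_second]
    rw [ent_congr hpt]
    have he := ent_comp_equiv
      (⟨fun x : (ZMod q × M.Y × M.Y) × ZMod q =>
          ((x.1.1 + x.2, x.1.2.1), (x.2, x.1.2.2)),
        fun z : (ZMod q × M.Y) × ZMod q × M.Y =>
          ((z.1.1 - z.2.1, z.1.2, z.2.2), z.2.1),
        fun x => by
          obtain ⟨⟨u1, y1, y2⟩, u2⟩ := x
          simp,
        fun z => by
          obtain ⟨⟨a, y1⟩, u2, y2⟩ := z
          simp⟩)
      (fun z : (ZMod q × M.Y) × ZMod q × M.Y => Df M z.1 * Df M z.2)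
    rw [← ent_prod_mul (Df M) (Df M) (sum_Df hM) (sum_Df hM)]
    rw [← he]
    exact ent_congr fun x => rfl
  rw [eB, eABC, eAB, eBC] at key
  exact key

lemma G1_ent (hM : IsMAC M) :
    ent (Gf (minusT q M)) = ent (Gf M) + ent (Gf M) := by
  have hpt : ∀ yy : M.Y × M.Y, Gf (minusT q M) yy = Gf M yy.1 * Gf M yy.2 := by
    intro yy
    calc Gf (minusT q M) yy
        = ∑ u1, ∑ v1, Cf (minusT q M) (u1, (v1, yy)) := rfl
      _ = ∑ u1, ∑ v1, ∑ u2, ∑ v2, mj M u1 u2 v1 v2 yy.1 yy.2 :=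
          Finset.sum_congr rfl fun u1 _ => Finset.sum_congr rfl fun v1 _ => m1 u1 v1 yy
      _ = ∑ u1, ∑ u2, ∑ v1, ∑ v2, mj M u1 u2 v1 v2 yy.1 yy.2 :=
          Finset.sum_congr rfl fun u1 _ => Finset.sum_comm
      _ = ∑ u2, ∑ u1, ∑ v1, ∑ v2, mj M u1 u2 v1 v2 yy.1 yy.2 := Finset.sum_comm
      _ = ∑ u2, ∑ u1, ∑ v2, ∑ v1, mj M u1 u2 v1 v2 yy.1 yy.2 :=
          Finset.sum_congr rfl fun u2 _ => Finset.sum_congr rfl fun u1 _ =>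
            Finset.sum_comm
      _ = ∑ u2, ∑ v2, ∑ u1, ∑ v1, mj M u1 u2 v1 v2 yy.1 yy.2 :=
          Finset.sum_congr rfl fun u2 _ => Finset.sum_comm
      _ = ∑ u2, ∑ v2, Gf M yy.1 * Cf M (u2, (v2, yy.2)) :=
          Finset.sum_congr rfl fun u2 _ => Finset.sum_congr rfl fun v2 _ =>
            mc u2 v2 yy.1 yy.2
      _ = Gf M yy.1 * ∑ u2, ∑ v2, Cf M (u2, (v2, yy.2)) := by
          simp only [Finset.mul_sum]
      _ = Gf M yy.1 * Gf M yy.2 := rfl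
  refine (ent_congr hpt).trans ?_
  exact ent_prod_mul (Gf M) (Gf M) (sum_Gf hM) (sum_Gf hM)

lemma G2_ent : ent (Gf (plusT q M)) = ent (Cf (minusT q M)) := by
  have he := ent_comp_equiv
    (⟨fun z : (M.Y × M.Y) × ZMod q × ZMod q => (z.2.1, (z.2.2, z.1)),
      fun s : ZMod q × ZMod q × (M.Y × M.Y) => (s.2.2, (s.1, s.2.1)),
      fun z => rfl, fun s => rfl⟩)
    (Cf (minusT q M))
  refine Eq.trans ?_ he
  refine ent_congr fun z => ?_
  obtain ⟨⟨y1, y2⟩, u1, v1⟩ := z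
  calc Gf (plusT q M) ((y1, y2), (u1, v1))
      = ∑ u2, ∑ v2, Cf (plusT q M) (u2, (v2, ((y1, y2), (u1, v1)))) := rfl
    _ = ∑ u2, ∑ v2, mj M u1 u2 v1 v2 y1 y2 :=
        Finset.sum_congr rfl fun u2 _ => Finset.sum_congr rfl fun v2 _ =>
          m2 u1 u2 v1 v2 y1 y2
    _ = Cf (minusT q M) (u1, (v1, (y1, y2))) := (m1 u1 v1 (y1, y2)).symm

lemma G3_ent (hM : IsMAC M) :
    ent (Cf (plusT q M)) = ent (Cf M) + ent (Cf M) := by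
  have he := ent_comp_equiv
    (⟨fun s : ZMod q × ZMod q × ((M.Y × M.Y) × ZMod q × ZMod q) =>
        ((s.2.2.2.1 + s.1, (s.2.2.2.2 + s.2.1, s.2.2.1.1)), (s.1, (s.2.1, s.2.2.1.2))),
      fun z : (ZMod q × ZMod q × M.Y) × ZMod q × ZMod q × M.Y =>
        (z.2.1, (z.2.2.1, ((z.1.2.2, z.2.2.2), (z.1.1 - z.2.1, z.1.2.1 - z.2.2.1)))),
      fun s => by
        obtain ⟨u2, v2, ⟨y1, y2⟩, u1, v1⟩ := s
        simp,
      fun z => by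
        obtain ⟨⟨a, b, y1⟩, u2, v2, y2⟩ := z
        simp⟩)
    (fun z : (ZMod q × ZMod q × M.Y) × ZMod q × ZMod q × M.Y => Cf M z.1 * Cf M z.2)
  rw [← ent_prod_mul (Cf M) (Cf M) (sum_Cf hM) (sum_Cf hM), ← he]
  refine ent_congr fun s => ?_
  obtain ⟨u2, v2, ⟨y1, y2⟩, u1, v1⟩ := s
  exact m2 u1 u2 v1 v2 y1 y2

lemma F1_I (hM : IsMAC M) : I1 q (minusT q M) + I1 q (plusT q M) ≤ 2 * I1 q M := by
  have h1 := I1_mul (isMAC_minusT hM)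
  have h2 := I1_mul (isMAC_plusT hM)
  have h3 := I1_mul hM
  have hL := log_q_pos (q := q)
  have hmul : (I1 q (minusT q M) + I1 q (plusT q M)) * Real.log q
      ≤ (2 * I1 q M) * Real.log q := by
    rw [add_mul, h1, h2,
      show (2 * I1 q M) * Real.log q = 2 * (I1 q M * Real.log q) from by ring, h3]
    have h4 := F1_ent hM
    have h5 := G3_ent hM
    linarith
  exact le_of_mul_le_mul_right hmul hL

lemma F2_I (hM : IsMAC M) : I2 q (minusT q M) + I2 q (plusT q M) ≤ 2 * I2 q M := by
  have h1 := I2_mul (isMAC_minusT hM)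
  have h2 := I2_mul (isMAC_plusT hM)
  have h3 := I2_mul hM
  have hL := log_q_pos (q := q)
  have hmul : (I2 q (minusT q M) + I2 q (plusT q M)) * Real.log q
      ≤ (2 * I2 q M) * Real.log q := by
    rw [add_mul, h1, h2,
      show (2 * I2 q M) * Real.log q = 2 * (I2 q M * Real.log q) from by ring, h3]
    have h4 := F2_ent hM
    have h5 := G3_ent hM
    linarith
  exact le_of_mul_le_mul_right hmul hL

lemma F3_I (hM : IsMAC M) : I12 q (minusT q M) + I12 q (plusT q M) = 2 * I12 q M := by
  have h1 := I12_mul (isMAC_minusT hM)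
  have h2 := I12_mul (isMAC_plusT hM)
  have h3 := I12_mul hM
  have hL := log_q_pos (q := q)
  have hmul : (I12 q (minusT q M) + I12 q (plusT q M)) * Real.log q
      = (2 * I12 q M) * Real.log q := by
    rw [add_mul, h1, h2,
      show (2 * I12 q M) * Real.log q = 2 * (I12 q M * Real.log q) from by ring, h3]
    have h4 := G1_ent hM
    have h5 := G2_ent (M := M)
    have h6 := G3_ent hM
    linarith
  exact mul_right_cancel₀ (ne_of_gt hL) hmul

end Channel

/-- `½ 𝕀(P⁻) + ½ 𝕀(P⁺) ⊆ 𝕀(P)`, and the set sum contains a point on the dominant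
face of `𝕀(P)` (a point with `R₁ + R₂ = I⁽¹²⁾(P)`). -/
theorem half_sum_regions (q : ℕ) [Fact (Nat.Prime q)] (M : MAC q) (hM : IsMAC M) :
    {r : ℝ × ℝ | ∃ a ∈ rateRegion q (minusT q M), ∃ b ∈ rateRegion q (plusT q M),
        r = (1 / 2 : ℝ) • a + (1 / 2 : ℝ) • b} ⊆ rateRegion q M ∧
    ∃ r : ℝ × ℝ,
      (∃ a ∈ rateRegion q (minusT q M), ∃ b ∈ rateRegion q (plusT q M),
        r = (1 / 2 : ℝ) • a + (1 / 2 : ℝ) • b) ∧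
      r.1 + r.2 = I12 q M := by
  have hMm := isMAC_minusT hM
  have hMp := isMAC_plusT hM
  constructor
  · rintro r ⟨a, ha, b, hb, rfl⟩
    obtain ⟨ha1, ha2, ha3, ha4, ha5⟩ := ha
    obtain ⟨hb1, hb2, hb3, hb4, hb5⟩ := hb
    have hf1 := F1_I hM
    have hf2 := F2_I hM
    have hf3 := F3_I hM
    have e1 : ((1 / 2 : ℝ) • a + (1 / 2 : ℝ) • b).1 = (1 / 2 : ℝ) * a.1 + (1 / 2 : ℝ) * b.1 := rfl
    have e2 : ((1 / 2 : ℝ) • a + (1 / 2 : ℝ) • b).2 = (1 / 2 : ℝ) * a.2 + (1 / 2 : ℝ) * b.2 := rfl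
    refine ⟨?_, ?_, ?_, ?_, ?_⟩
    · rw [e1]; linarith
    · rw [e1]; linarith
    · rw [e2]; linarith
    · rw [e2]; linarith
    · rw [e1, e2]; linarith
  · set tm := min (I1 q (minusT q M)) (I12 q (minusT q M)) with htm
    set tp := min (I1 q (plusT q M)) (I12 q (plusT q M)) with htp
    set a : ℝ × ℝ := (tm, I12 q (minusT q M) - tm) with hadef
    set b : ℝ × ℝ := (tp, I12 q (plusT q M) - tp) with hbdef
    have hamem : a ∈ rateRegion q (minusT q M) := by
      refine ⟨le_min (I1_nonneg hMm) (I12_nonneg hMm), min_le_left _ _,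
        sub_nonneg.mpr (min_le_right _ _), ?_, le_of_eq (by simp [hadef])⟩
      show I12 q (minusT q M) - tm ≤ I2 q (minusT q M)
      rcases le_total (I1 q (minusT q M)) (I12 q (minusT q M)) with h | h
      · rw [htm, min_eq_left h]
        have := I12_le_I1_add_I2 hMm
        linarith
      · rw [htm, min_eq_right h]
        have := I2_nonneg hMm
        linarith
    have hbmem : b ∈ rateRegion q (plusT q M) := by
      refine ⟨le_min (I1_nonneg hMp) (I12_nonneg hMp), min_le_left _ _,
        sub_nonneg.mpr (min_le_right _ _), ?_, le_of_eq (by simp [hbdef])⟩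
      show I12 q (plusT q M) - tp ≤ I2 q (plusT q M)
      rcases le_total (I1 q (plusT q M)) (I12 q (plusT q M)) with h | h
      · rw [htp, min_eq_left h]
        have := I12_le_I1_add_I2 hMp
        linarith
      · rw [htp, min_eq_right h]
        have := I2_nonneg hMp
        linarith
    refine ⟨(1 / 2 : ℝ) • a + (1 / 2 : ℝ) • b, ⟨a, hamem, b, hbmem, rfl⟩, ?_⟩
    have e1 : ((1 / 2 : ℝ) • a + (1 / 2 : ℝ) • b).1 = (1 / 2 : ℝ) * a.1 + (1 / 2 : ℝ) * b.1 := rfl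
    have e2 : ((1 / 2 : ℝ) • a + (1 / 2 : ℝ) • b).2 = (1 / 2 : ℝ) * a.2 + (1 / 2 : ℝ) * b.2 := rfl
    rw [e1, e2]
    have hf3 := F3_I hM
    have ha1 : a.1 = tm := rfl
    have ha2 : a.2 = I12 q (minusT q M) - tm := rfl
    have hb1 : b.1 = tp := rfl
    have hb2 : b.2 = I12 q (plusT q M) - tp := rfl
    rw [ha1, ha2, hb1, hb2]
    linarith

end PolarMAC
end

section
/- Let P be a two-user q-ary input multiple-access channel (q prime) and (α,γ) ∈ F_q² with (α,γ) ≠ (0,0). Then the channel (P[α,γ])^g is degraded with respect to (P⁺)[α,γ]: for all y₁, y₂, x, s, (P[α,γ])^g(y₁,y₂,x | s) = ∑_{u₁,v₁ : αu₁+γv₁ = x} (P⁺)[α,γ](y₁,y₂,u₁,v₁ | s); that is, (P[α,γ])^g is obtained from (P⁺)[α,γ] by deterministically processing the output (y₁,y₂,u₁,v₁) into (y₁,y₂, αu₁+γv₁). -/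
open Finset

namespace PolarMAC

variable (q : ℕ) [Fact (Nat.Prime q)]

/-- A single-user `q`-ary input channel with finite output alphabet `B`. -/
structure Chan (q : ℕ) where
  B : Type
  [fintypeB : Fintype B]
  Q : ZMod q → B → ℝ

attribute [instance] Chan.fintypeB

/-- `C` is a genuine channel: entries nonnegative, rows summing to one. -/
def IsChan {q : ℕ} [Fact (Nat.Prime q)] (C : Chan q) : Prop :=
  (∀ x b, 0 ≤ C.Q x b) ∧ ∀ x, ∑ b, C.Q x b = 1


/-- `P[α,γ](y|s) = q⁻¹ ∑_{u,v : αu+γv=s} P(y|u,v)`, the channel `αU + γV → Y`. -/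
noncomputable def chLin (M : MAC q) (a g : ZMod q) : Chan q :=
  ⟨M.Y, fun s y => (q : ℝ)⁻¹ * ∑ u, ∑ v, if a * u + g * v = s then M.P u v y else 0⟩


/-- `Q^b(y₁,y₂ | x₁) = q⁻¹ ∑_{x₂} Q(y₁|x₁+x₂) Q(y₂|x₂)`. -/
noncomputable def chB (C : Chan q) : Chan q :=
  ⟨C.B × C.B, fun x₁ y => (q : ℝ)⁻¹ * ∑ x₂, C.Q (x₁ + x₂) y.1 * C.Q x₂ y.2⟩

/-- `Q^g(y₁,y₂,x₁ | x₂) = q⁻¹ Q(y₁|x₁+x₂) Q(y₂|x₂)`, output `((y₁,y₂),x₁)`. -/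
noncomputable def chG (C : Chan q) : Chan q :=
  ⟨(C.B × C.B) × ZMod q, fun x₂ z => (q : ℝ)⁻¹ * (C.Q (z.2 + x₂) z.1.1 * C.Q x₂ z.1.2)⟩



private lemma ite_sum {α : Type*} [Fintype α] (b : Prop) [Decidable b] (f : α → ℝ) :
    (if b then ∑ i, f i else 0) = ∑ i, if b then f i else 0 := by
  split <;> simp

private lemma swap4 {q : ℕ} [NeZero q] (H : ZMod q → ZMod q → ZMod q → ZMod q → ℝ) :
    ∑ u₁, ∑ v₁, ∑ u, ∑ v, H u₁ v₁ u v = ∑ u, ∑ v, ∑ u₁, ∑ v₁, H u₁ v₁ u v := by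
  trans ∑ u₁, ∑ u, ∑ v, ∑ v₁, H u₁ v₁ u v
  · refine Finset.sum_congr rfl fun u₁ _ => ?_
    trans ∑ u, ∑ v₁, ∑ v, H u₁ v₁ u v
    · exact Finset.sum_comm
    · exact Finset.sum_congr rfl fun u _ => Finset.sum_comm
  · trans ∑ u, ∑ u₁, ∑ v, ∑ v₁, H u₁ v₁ u v
    · exact Finset.sum_comm
    · exact Finset.sum_congr rfl fun u _ => Finset.sum_comm

private lemma key_shift {q : ℕ} [NeZero q] (f : ZMod q → ZMod q → ℝ) (a g x s u v : ZMod q)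
    (h : a * u + g * v = s) :
    (∑ u₁, ∑ v₁, if a * u₁ + g * v₁ = x then f (u₁ + u) (v₁ + v) else 0)
      = ∑ p, ∑ r, if a * p + g * r = x + s then f p r else 0 := by
  rw [← Equiv.sum_comp (Equiv.addRight u)
      (fun p => ∑ r, if a * p + g * r = x + s then f p r else 0)]
  refine Finset.sum_congr rfl fun u₁ _ => ?_
  rw [← Equiv.sum_comp (Equiv.addRight v)
      (fun r => if a * (Equiv.addRight u u₁) + g * r = x + s
        then f (Equiv.addRight u u₁) r else 0)]
  refine Finset.sum_congr rfl fun v₁ _ => ?_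
  simp only [Equiv.coe_addRight]
  refine if_congr ?_ rfl rfl
  constructor <;> intro h' <;> first
    | linear_combination h' + h
    | linear_combination h' - h

private lemma main_sum {q : ℕ} [NeZero q] (f₁ f₂ : ZMod q → ZMod q → ℝ) (a g x s : ZMod q) :
    (∑ u, ∑ v, if a * u + g * v = x + s then f₁ u v else 0) *
      (∑ u, ∑ v, if a * u + g * v = s then f₂ u v else 0)
    = ∑ u₁, ∑ v₁, if a * u₁ + g * v₁ = x then
        ∑ u, ∑ v, if a * u + g * v = s then f₁ (u₁ + u) (v₁ + v) * f₂ u v else 0 else 0 := by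
  simp only [ite_sum]
  rw [swap4 (fun u₁ v₁ u v => if a * u₁ + g * v₁ = x then
      (if a * u + g * v = s then f₁ (u₁ + u) (v₁ + v) * f₂ u v else 0) else 0)]
  rw [mul_comm, Finset.sum_mul]
  refine Finset.sum_congr rfl fun u _ => ?_
  rw [Finset.sum_mul]
  refine Finset.sum_congr rfl fun v _ => ?_
  rw [ite_mul, zero_mul]
  by_cases h : a * u + g * v = s
  · simp only [if_pos h]
    rw [← key_shift f₁ a g x s u v h, Finset.mul_sum]
    refine Finset.sum_congr rfl fun u₁ _ => ?_
    rw [Finset.mul_sum]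
    refine Finset.sum_congr rfl fun v₁ _ => ?_
    rw [mul_ite, mul_zero]
    refine if_congr Iff.rfl (by ring) rfl
  · simp [if_neg h]

/-- **Appendix B, claim (i)**: `(P[α,γ])^g` is degraded with respect to `(P⁺)[α,γ]`:
it is obtained by processing the output `(y₁, y₂, u₁, v₁)` into `(y₁, y₂, αu₁+γv₁)`. -/
theorem chG_degraded (q : ℕ) [Fact (Nat.Prime q)] (M : MAC q) (hM : IsMAC M)
    (a g : ZMod q) (hag : (a, g) ≠ (0, 0)) :
    ∀ (y₁ y₂ : M.Y) (x s : ZMod q),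
      (chG q (chLin q M a g)).Q s ((y₁, y₂), x) =
        ∑ u₁, ∑ v₁, if a * u₁ + g * v₁ = x then
          (chLin q (plusT q M) a g).Q s ((y₁, y₂), (u₁, v₁)) else 0 := by
  intro y₁ y₂ x s
  simp only [chG, chLin, plusT]
  rw [show ((q:ℝ)⁻¹ * (((q:ℝ)⁻¹ * ∑ u, ∑ v, if a * u + g * v = x + s then M.P u v y₁ else 0)
      * ((q:ℝ)⁻¹ * ∑ u, ∑ v, if a * u + g * v = s then M.P u v y₂ else 0)))
    = ((q:ℝ)⁻¹ * ((q:ℝ)^2)⁻¹) *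
      ((∑ u, ∑ v, if a * u + g * v = x + s then M.P u v y₁ else 0)
        * (∑ u, ∑ v, if a * u + g * v = s then M.P u v y₂ else 0)) from by ring]
  rw [main_sum (fun u v => M.P u v y₁) (fun u v => M.P u v y₂) a g x s]
  rw [Finset.mul_sum]
  refine Finset.sum_congr rfl fun u₁ _ => ?_
  rw [Finset.mul_sum]
  refine Finset.sum_congr rfl fun v₁ _ => ?_
  rw [mul_ite, mul_zero]
  refine if_congr Iff.rfl ?_ rfl
  rw [Finset.mul_sum, Finset.mul_sum]
  refine Finset.sum_congr rfl fun u _ => ?_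
  rw [Finset.mul_sum, Finset.mul_sum]
  refine Finset.sum_congr rfl fun v _ => ?_
  rw [mul_ite, mul_zero, mul_ite, mul_zero]
  refine if_congr Iff.rfl (by ring) rfl


end PolarMAC
end

section
/- Let P be a two-user q-ary input multiple-access channel (q prime) and (α,γ) ∈ F_q² with (α,γ) ≠ (0,0). Then the channels (P[α,γ])^b and (P⁻)[α,γ] are equal: (P[α,γ])^b(y₁,y₂ | x) = (P⁻)[α,γ](y₁,y₂ | x) for all y₁, y₂, x. Consequently, I((P⁻)[α,γ]) + I((P⁺)[α,γ]) ≥ 2 I(P[α,γ]). -/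
open Finset

namespace PolarMAC

variable (q : ℕ) [Fact (Nat.Prime q)]

/-- `I(Q)`: mutual information (base `q`) developed across `Q` with uniform input. -/
noncomputable def Ich (C : Chan q) : ℝ :=
  MIq q (fun (x : ZMod q) (b : C.B) => C.Q x b / (q : ℝ))


lemma neg_mul_logb_mul (q : ℕ) (x y : ℝ) :
    -(x * y * Real.logb q (x * y)) = y * -(x * Real.logb q x) + x * -(y * Real.logb q y) := by
  rcases eq_or_ne x 0 with rfl | hx; · simp
  rcases eq_or_ne y 0 with rfl | hy; · simp
  rw [Real.logb_mul hx hy]; ring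

lemma Hq_prod {α β : Type*} [Fintype α] [Fintype β] (q : ℕ) (p : α → ℝ) (r : β → ℝ)
    (hp : ∑ a, p a = 1) (hr : ∑ b, r b = 1) :
    Hq q (fun ab : α × β => p ab.1 * r ab.2) = Hq q p + Hq q r := by
  unfold Hq
  rw [Fintype.sum_prod_type]
  have h : ∀ a : α, ∑ b, -(p a * r b * Real.logb q (p a * r b))
      = (∑ b, r b) * -(p a * Real.logb q (p a)) + p a * ∑ b, -(r b * Real.logb q (r b)) := by
    intro a
    rw [Finset.sum_mul, Finset.mul_sum, ← Finset.sum_add_distrib]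
    refine Finset.sum_congr rfl fun b _ => ?_
    rw [neg_mul_logb_mul q (p a) (r b)]
  simp_rw [h, hr, one_mul]
  rw [Finset.sum_add_distrib, ← Finset.sum_mul, hp]
  ring

lemma Hq_equiv {α β : Type*} [Fintype α] [Fintype β] (q : ℕ) (e : α ≃ β) (p : β → ℝ) :
    Hq q (fun a => p (e a)) = Hq q p :=
  Fintype.sum_equiv e _ _ (fun _ => rfl)

lemma logSum {ι : Type*} (t : Finset ι) (A B : ι → ℝ) (hA : ∀ i ∈ t, 0 ≤ A i)
    (hB : ∀ i ∈ t, 0 ≤ B i) (hAB : ∀ i ∈ t, B i = 0 → A i = 0) :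
    (∑ i ∈ t, A i) * (Real.log (∑ i ∈ t, A i) - Real.log (∑ i ∈ t, B i)) ≤
      ∑ i ∈ t, A i * (Real.log (A i) - Real.log (B i)) := by
  rcases eq_or_lt_of_le (Finset.sum_nonneg hB) with hSB | hSB
  · have hBz : ∀ i ∈ t, B i = 0 := by
      intro i hi
      have := (Finset.sum_eq_zero_iff_of_nonneg hB).mp hSB.symm i hi
      exact this
    have hAz : ∀ i ∈ t, A i = 0 := fun i hi => hAB i hi (hBz i hi)
    rw [Finset.sum_eq_zero hAz]
    simp only [zero_mul]
    refine Finset.sum_nonneg fun i hi => ?_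
    rw [hAz i hi]; simp
  · -- SB > 0
    set SA := ∑ i ∈ t, A i with hSA
    set SB := ∑ i ∈ t, B i with hSBdef
    have hSA0 : 0 ≤ SA := Finset.sum_nonneg hA
    have jensen := (Real.convexOn_mul_log).map_sum_le
      (t := t) (w := fun i => B i / SB) (p := fun i => A i / B i)
      (fun i hi => div_nonneg (hB i hi) hSB.le)
      (by rw [← Finset.sum_div, div_self hSB.ne'])
      (fun i hi => by
        simp only [Set.mem_Ici]
        exact div_nonneg (hA i hi) (hB i hi))
    have hpt : ∑ i ∈ t, (B i / SB) • (A i / B i) = SA / SB := by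
      rw [Finset.sum_div]
      refine Finset.sum_congr rfl fun i hi => ?_
      rcases eq_or_ne (B i) 0 with hb | hb
      · rw [hAB i hi hb, hb]; simp
      · field_simp
        rw [smul_eq_mul]; field_simp [hSB.ne']
    rw [hpt] at jensen
    -- multiply through by SB
    have key : SA * (Real.log SA - Real.log SB) ≤ SB * ∑ i ∈ t, (B i / SB) • ((A i / B i) * Real.log (A i / B i)) := by
      rcases eq_or_lt_of_le hSA0 with hSA0' | hSApos
      · rw [← hSA0']
        simp only [zero_mul]
        calc (0:ℝ) = SB * ((0/SB) * Real.log (0/SB)) := by simp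
          _ ≤ _ := by
              rw [← hSA0'] at jensen
              exact mul_le_mul_of_nonneg_left jensen hSB.le
      · have : SA * (Real.log SA - Real.log SB) = SB * ((SA/SB) * Real.log (SA/SB)) := by
          rw [Real.log_div hSApos.ne' hSB.ne']
          field_simp
        rw [this]
        exact mul_le_mul_of_nonneg_left jensen hSB.le
    refine key.trans ?_
    rw [Finset.mul_sum]
    refine Finset.sum_le_sum fun i hi => ?_
    rcases eq_or_ne (B i) 0 with hb | hb
    · rw [hAB i hi hb, hb]; simp
    rcases eq_or_ne (A i) 0 with ha | ha
    · simp [ha]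
    have hBpos : 0 < B i := lt_of_le_of_ne (hB i hi) (Ne.symm hb)
    rw [smul_eq_mul, Real.log_div ha hb]
    rw [show SB * (B i / SB * (A i / B i * (Real.log (A i) - Real.log (B i)))) = A i * (Real.log (A i) - Real.log (B i)) by field_simp]


lemma HqDiff {α β : Type*} [Fintype α] [Fintype β] (q : ℕ) (r : α → β → ℝ) :
    Hq q (fun b => ∑ a, r a b) - Hq q (fun ab : α × β => r ab.1 ab.2)
      = (∑ a, ∑ b, r a b * (Real.log (r a b) - Real.log (∑ a', r a' b))) / Real.log q := by
  unfold Hq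
  rw [Fintype.sum_prod_type]
  simp only []
  conv_lhs => rw [Finset.sum_comm]
  conv_rhs => rw [Finset.sum_comm]
  rw [← Finset.sum_sub_distrib, Finset.sum_div]
  refine Finset.sum_congr rfl fun b _ => ?_
  simp only [Real.logb]
  set S := ∑ a, r a b with hS
  have key : ∑ a, r a b * (Real.log (r a b) - Real.log S)
      = (∑ a, r a b * Real.log (r a b)) - S * Real.log S := by
    simp_rw [mul_sub]
    rw [Finset.sum_sub_distrib, ← Finset.sum_mul]
  rw [key]
  have h2 : ∀ x : ℝ, -(x * (Real.log x / Real.log q)) = -(x * Real.log x)/Real.log q :=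
    fun x => by ring
  simp_rw [h2]
  rw [← Finset.sum_div]
  rw [show (∑ a, -(r a b * Real.log (r a b))) = -∑ a, r a b * Real.log (r a b) by
    rw [Finset.sum_neg_distrib]]
  ring

lemma MIq_merge_le {α β γ : Type*} [Fintype α] [Fintype β] [Fintype γ] [DecidableEq γ]
    {q : ℕ} (hq : 1 < q) (p : α → β → ℝ) (hp : ∀ a b, 0 ≤ p a b) (f : β → γ) :
    MIq q (fun a c => ∑ b, if f b = c then p a b else 0) ≤ MIq q p := by
  classical
  unfold MIq
  have hA : (fun a => ∑ c, ∑ b, if f b = c then p a b else 0) = (fun a => ∑ b, p a b) := by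
    funext a
    rw [Finset.sum_comm]
    simp
  rw [hA]
  have hlog : (0:ℝ) < Real.log q := Real.log_pos (by exact_mod_cast hq)
  have h1 := HqDiff q p
  have h2 := HqDiff q (fun a c => ∑ b, if f b = c then p a b else 0)
  have hnum : (∑ a, ∑ c, (∑ b, if f b = c then p a b else 0) *
        (Real.log (∑ b, if f b = c then p a b else 0)
          - Real.log (∑ a', ∑ b, if f b = c then p a' b else 0)))
      ≤ ∑ a, ∑ b, p a b * (Real.log (p a b) - Real.log (∑ a', p a' b)) := by
    refine Finset.sum_le_sum fun a _ => ?_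
    rw [← Finset.sum_fiberwise (Finset.univ) f (fun b => p a b * (Real.log (p a b) - Real.log (∑ a', p a' b)))]
    refine Finset.sum_le_sum fun c _ => ?_
    have e1 : (∑ b, if f b = c then p a b else 0) = ∑ b ∈ Finset.univ.filter (fun b => f b = c), p a b := by
      rw [Finset.sum_filter]
    have e2 : (∑ a', ∑ b, if f b = c then p a' b else 0)
        = ∑ b ∈ Finset.univ.filter (fun b => f b = c), ∑ a', p a' b := by
      rw [Finset.sum_comm, Finset.sum_filter]
      refine Finset.sum_congr rfl fun b _ => ?_
      split_ifs with h
      · rfl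
      · simp
    rw [e1, e2]
    exact logSum _ (fun b => p a b) (fun b => ∑ a', p a' b)
      (fun b _ => hp a b)
      (fun b _ => Finset.sum_nonneg fun a' _ => hp a' b)
      (fun b _ hb => by
        have := (Finset.sum_eq_zero_iff_of_nonneg (fun a' _ => hp a' b)).mp hb a (Finset.mem_univ a)
        exact this)
  have hfin : (∑ a, ∑ c, (∑ b, if f b = c then p a b else 0) *
        (Real.log (∑ b, if f b = c then p a b else 0)
          - Real.log (∑ a', ∑ b, if f b = c then p a' b else 0))) / Real.log q
      ≤ (∑ a, ∑ b, p a b * (Real.log (p a b) - Real.log (∑ a', p a' b))) / Real.log q := by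
    gcongr
  simp only []
  linarith [h1, h2, hfin]


/- ## helpers for ite/sum manipulation -/

lemma aux_ite_sum_push {c : Prop} [Decidable c] {ι : Type*} (s : Finset ι) (f : ι → ℝ) :
    (if c then ∑ i ∈ s, f i else 0) = ∑ i ∈ s, if c then f i else 0 := by
  split_ifs with h
  · rfl
  · simp

lemma aux_ite_ite_and {c d : Prop} [Decidable c] [Decidable d] (x : ℝ) :
    (if c then (if d then x else 0) else 0) = if c ∧ d then x else 0 := by
  split_ifs <;> simp_all

lemma aux_ite_and_mul {c d : Prop} [Decidable c] [Decidable d] (x y : ℝ) :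
    (if c ∧ d then x * y else 0) = (if c then x else 0) * (if d then y else 0) := by
  split_ifs <;> simp_all

lemma aux_sum_swap_blocks {α β : Type*} [Fintype α] [Fintype β] (F : α → α → β → β → ℝ) :
    ∑ a₁, ∑ a₂, ∑ b₁, ∑ b₂, F a₁ a₂ b₁ b₂ = ∑ b₁, ∑ b₂, ∑ a₁, ∑ a₂, F a₁ a₂ b₁ b₂ := by
  have l : ∑ p : α × α, ∑ r : β × β, F p.1 p.2 r.1 r.2
      = ∑ a₁, ∑ a₂, ∑ b₁, ∑ b₂, F a₁ a₂ b₁ b₂ := by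
    rw [Fintype.sum_prod_type]
    refine Finset.sum_congr rfl fun a₁ _ => ?_
    refine Finset.sum_congr rfl fun a₂ _ => ?_
    exact Fintype.sum_prod_type _
  have r : ∑ r : β × β, ∑ p : α × α, F p.1 p.2 r.1 r.2
      = ∑ b₁, ∑ b₂, ∑ a₁, ∑ a₂, F a₁ a₂ b₁ b₂ := by
    rw [Fintype.sum_prod_type]
    refine Finset.sum_congr rfl fun b₁ _ => ?_
    refine Finset.sum_congr rfl fun b₂ _ => ?_
    exact Fintype.sum_prod_type _
  rw [← l, ← r, Finset.sum_comm]

lemma aux_card_zmod (q : ℕ) [Fact (Nat.Prime q)] [NeZero q] :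
    (Finset.univ : Finset (ZMod q)).card = q := by
  rw [Finset.card_univ, ZMod.card]

lemma aux_Hq_unif (q : ℕ) [Fact (Nat.Prime q)] [NeZero q] : Hq q (fun _ : ZMod q => (q:ℝ)⁻¹) = 1 := by
  have hq : 1 < q := (Fact.out : q.Prime).one_lt
  have h1 : (1:ℝ) < q := by exact_mod_cast hq
  have h0 : (q:ℝ) ≠ 0 := by linarith
  unfold Hq
  rw [Finset.sum_const, aux_card_zmod, Real.logb_inv, Real.logb_self_eq_one h1]
  simp [nsmul_eq_mul, h0]

/-- Mutual information across a channel given as a bare matrix. -/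
noncomputable def IchF (q : ℕ) [NeZero q] {B : Type*} [Fintype B] (Q : ZMod q → B → ℝ) : ℝ :=
  MIq q (fun x b => Q x b / (q : ℝ))

lemma aux_IchF_eq (q : ℕ) [Fact (Nat.Prime q)] [NeZero q] {B : Type*} [Fintype B] (Q : ZMod q → B → ℝ)
    (hrow : ∀ x, ∑ b, Q x b = 1) :
    IchF q Q = 1 + Hq q (fun b => ∑ x, Q x b / q)
      - Hq q (fun xb : ZMod q × B => Q xb.1 xb.2 / q) := by
  unfold IchF MIq
  have h : (fun x : ZMod q => ∑ b, Q x b / (q:ℝ)) = fun _ => (q:ℝ)⁻¹ := by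
    funext x
    rw [← Finset.sum_div, hrow, one_div]
  rw [h, aux_Hq_unif]

lemma aux_sum_marg (q : ℕ) [Fact (Nat.Prime q)] [NeZero q] {B : Type*} [Fintype B] (Q : ZMod q → B → ℝ)
    (hrow : ∀ x, ∑ b, Q x b = 1) : ∑ b, ∑ x, Q x b / (q:ℝ) = 1 := by
  have h0 : (q:ℝ) ≠ 0 := by
    have : 0 < q := (Fact.out : q.Prime).pos
    positivity
  rw [Finset.sum_comm]
  have h : ∀ x : ZMod q, ∑ b, Q x b / (q:ℝ) = (q:ℝ)⁻¹ := by
    intro x; rw [← Finset.sum_div, hrow, one_div]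
  simp_rw [h]
  rw [Finset.sum_const, aux_card_zmod]
  simp [h0]

lemma aux_sum_joint (q : ℕ) [Fact (Nat.Prime q)] [NeZero q] {B : Type*} [Fintype B] (Q : ZMod q → B → ℝ)
    (hrow : ∀ x, ∑ b, Q x b = 1) :
    ∑ xb : ZMod q × B, Q xb.1 xb.2 / (q:ℝ) = 1 := by
  have h0 : (q:ℝ) ≠ 0 := by
    have : 0 < q := (Fact.out : q.Prime).pos
    positivity
  rw [Fintype.sum_prod_type]
  have h : ∀ x : ZMod q, ∑ b, Q x b / (q:ℝ) = (q:ℝ)⁻¹ := by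
    intro x; rw [← Finset.sum_div, hrow, one_div]
  simp_rw [h]
  rw [Finset.sum_const, aux_card_zmod]
  simp [h0]

/-- reindexing equivalence used for the `chG` joint entropy -/
def auxEquiv (q : ℕ) (B : Type*) :
    (ZMod q × ((B × B) × ZMod q)) ≃ ((ZMod q × B) × (ZMod q × B)) where
  toFun w := ((w.2.2 + w.1, w.2.1.1), (w.1, w.2.1.2))
  invFun p := (p.2.1, ((p.1.2, p.2.2), p.1.1 - p.2.1))
  left_inv w := by obtain ⟨x₂, ⟨⟨y₁, y₂⟩, x₁⟩⟩ := w; simp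
  right_inv p := by obtain ⟨⟨u, y₁⟩, ⟨x₂, y₂⟩⟩ := p; simp

/-- Chain rule: `I(Qᵇ) + I(Qᵍ) = 2 I(Q)` for a bare channel matrix. -/
lemma aux_chainEq (q : ℕ) [Fact (Nat.Prime q)] [NeZero q] {B : Type*} [Fintype B]
    (Q : ZMod q → B → ℝ) (hrow : ∀ x, ∑ b, Q x b = 1) :
    IchF q (fun x₁ (y : B × B) => (q:ℝ)⁻¹ * ∑ x₂, Q (x₁+x₂) y.1 * Q x₂ y.2)
      + IchF q (fun x₂ (z : (B × B) × ZMod q) => (q:ℝ)⁻¹ * (Q (z.2+x₂) z.1.1 * Q x₂ z.1.2))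
      = 2 * IchF q Q := by
  have h0 : (q:ℝ) ≠ 0 := Nat.cast_ne_zero.mpr (NeZero.ne q)
  have hrowB : ∀ x₁ : ZMod q, ∑ y : B × B, (q:ℝ)⁻¹ * ∑ x₂, Q (x₁+x₂) y.1 * Q x₂ y.2 = 1 := by
    intro x₁
    rw [← Finset.mul_sum, Fintype.sum_prod_type]
    have e : ∑ y1 : B, ∑ y2 : B, ∑ x₂ : ZMod q, Q (x₁+x₂) y1 * Q x₂ y2
        = ∑ x₂ : ZMod q, ∑ y1 : B, ∑ y2 : B, Q (x₁+x₂) y1 * Q x₂ y2 := by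
      rw [show (∑ y1 : B, ∑ y2 : B, ∑ x₂ : ZMod q, Q (x₁+x₂) y1 * Q x₂ y2)
          = ∑ y1 : B, ∑ x₂ : ZMod q, ∑ y2 : B, Q (x₁+x₂) y1 * Q x₂ y2 from
        Finset.sum_congr rfl fun y1 _ => Finset.sum_comm]
      exact Finset.sum_comm
    rw [e]
    have e2 : ∀ x₂ : ZMod q, ∑ y1 : B, ∑ y2 : B, Q (x₁+x₂) y1 * Q x₂ y2 = 1 := by
      intro x₂
      rw [← Finset.sum_mul_sum, hrow, hrow, one_mul]
    simp_rw [e2]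
    rw [Finset.sum_const, aux_card_zmod]
    simp [h0]
  have hrowG : ∀ x₂ : ZMod q,
      ∑ z : (B × B) × ZMod q, (q:ℝ)⁻¹ * (Q (z.2+x₂) z.1.1 * Q x₂ z.1.2) = 1 := by
    intro x₂
    rw [← Finset.mul_sum, Fintype.sum_prod_type]
    have e : ∑ y : B × B, ∑ x₁ : ZMod q, Q (x₁+x₂) y.1 * Q x₂ y.2
        = ∑ x₁ : ZMod q, ∑ y : B × B, Q (x₁+x₂) y.1 * Q x₂ y.2 := Finset.sum_comm
    rw [e]
    have e2 : ∀ x₁ : ZMod q, ∑ y : B × B, Q (x₁+x₂) y.1 * Q x₂ y.2 = 1 := by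
      intro x₁
      rw [Fintype.sum_prod_type, ← Finset.sum_mul_sum, hrow, hrow, one_mul]
    simp_rw [e2]
    rw [Finset.sum_const, aux_card_zmod]
    simp [h0]
  have hmB : (fun y : B × B => ∑ x₁, ((q:ℝ)⁻¹ * ∑ x₂, Q (x₁+x₂) y.1 * Q x₂ y.2) / (q:ℝ))
      = fun y : B × B => (∑ x, Q x y.1 / (q:ℝ)) * (∑ x, Q x y.2 / (q:ℝ)) := by
    funext y
    have e1 : ∀ x₁ : ZMod q, ((q:ℝ)⁻¹ * ∑ x₂, Q (x₁+x₂) y.1 * Q x₂ y.2) / (q:ℝ)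
        = (q:ℝ)⁻¹ * (q:ℝ)⁻¹ * ∑ x₂, Q (x₁+x₂) y.1 * Q x₂ y.2 := fun x₁ => by ring
    simp only [e1]
    rw [← Finset.mul_sum]
    have e2 : ∑ x₁ : ZMod q, ∑ x₂ : ZMod q, Q (x₁+x₂) y.1 * Q x₂ y.2
        = (∑ x, Q x y.1) * (∑ x, Q x y.2) := by
      rw [Finset.sum_comm]
      have e3 : ∀ x₂ : ZMod q, ∑ x₁ : ZMod q, Q (x₁+x₂) y.1 * Q x₂ y.2
          = (∑ x, Q x y.1) * Q x₂ y.2 := by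
        intro x₂
        rw [← Finset.sum_mul]
        congr 1
        exact Fintype.sum_equiv (Equiv.addRight x₂) _ _ (fun x => rfl)
      simp_rw [e3]
      rw [← Finset.mul_sum]
    rw [e2, ← Finset.sum_div, ← Finset.sum_div]
    ring
  have hmG : (fun z : (B × B) × ZMod q =>
        ∑ x₂, ((q:ℝ)⁻¹ * (Q (z.2+x₂) z.1.1 * Q x₂ z.1.2)) / (q:ℝ))
      = fun z : (B × B) × ZMod q =>
        ((q:ℝ)⁻¹ * ∑ x₂, Q (z.2+x₂) z.1.1 * Q x₂ z.1.2) / (q:ℝ) := by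
    funext z
    rw [← Finset.sum_div, ← Finset.mul_sum]
  have hswap : Hq q (fun z : (B × B) × ZMod q =>
        ((q:ℝ)⁻¹ * ∑ x₂, Q (z.2+x₂) z.1.1 * Q x₂ z.1.2) / (q:ℝ))
      = Hq q (fun xb : ZMod q × (B × B) =>
        ((q:ℝ)⁻¹ * ∑ x₂, Q (xb.1+x₂) xb.2.1 * Q x₂ xb.2.2) / (q:ℝ)) :=
    Hq_equiv q (Equiv.prodComm (B × B) (ZMod q))
      (fun xb : ZMod q × (B × B) =>
        ((q:ℝ)⁻¹ * ∑ x₂, Q (xb.1+x₂) xb.2.1 * Q x₂ xb.2.2) / (q:ℝ))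
  have hjG : Hq q (fun w : ZMod q × ((B × B) × ZMod q) =>
        ((q:ℝ)⁻¹ * (Q (w.2.2+w.1) w.2.1.1 * Q w.1 w.2.1.2)) / (q:ℝ))
      = Hq q (fun xb : ZMod q × B => Q xb.1 xb.2 / (q:ℝ))
        + Hq q (fun xb : ZMod q × B => Q xb.1 xb.2 / (q:ℝ)) := by
    set e2 := auxEquiv q B with he2
    have hfun : (fun w : ZMod q × ((B × B) × ZMod q) =>
          ((q:ℝ)⁻¹ * (Q (w.2.2+w.1) w.2.1.1 * Q w.1 w.2.1.2)) / (q:ℝ))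
        = fun w => ((fun p : (ZMod q × B) × (ZMod q × B) =>
            (Q p.1.1 p.1.2 / (q:ℝ)) * (Q p.2.1 p.2.2 / (q:ℝ))) (e2 w)) := by
      funext w
      show ((q:ℝ)⁻¹ * (Q (w.2.2+w.1) w.2.1.1 * Q w.1 w.2.1.2)) / (q:ℝ)
          = (Q (w.2.2 + w.1) w.2.1.1 / (q:ℝ)) * (Q w.1 w.2.1.2 / (q:ℝ))
      ring
    rw [hfun, Hq_equiv q e2
      (fun p : (ZMod q × B) × (ZMod q × B) => Q p.1.1 p.1.2 / (q:ℝ) * (Q p.2.1 p.2.2 / (q:ℝ)))]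
    exact Hq_prod q _ _ (aux_sum_joint q Q hrow) (aux_sum_joint q Q hrow)
  have hB2 : Hq q (fun y : B × B => (∑ x, Q x y.1 / (q:ℝ)) * (∑ x, Q x y.2 / (q:ℝ)))
      = Hq q (fun b : B => ∑ x, Q x b / (q:ℝ)) + Hq q (fun b : B => ∑ x, Q x b / (q:ℝ)) :=
    Hq_prod q _ _ (aux_sum_marg q Q hrow) (aux_sum_marg q Q hrow)
  rw [aux_IchF_eq q _ hrowB, aux_IchF_eq q _ hrowG, aux_IchF_eq q Q hrow]
  rw [hmB, hmG, hswap, hjG, hB2]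
  ring

lemma aux_pull (q : ℕ) (K : ℝ) (c : Prop) [Decidable c] (X : ℝ) :
    (if c then K * X else 0) = K * (if c then X else 0) := by
  split_ifs <;> simp

lemma aux_count (q : ℕ) [Fact (Nat.Prime q)] [NeZero q] (a g s : ZMod q)
    (hag : ¬(a = 0 ∧ g = 0)) :
    ∑ u : ZMod q, ∑ v : ZMod q, (if a*u+g*v = s then (1:ℝ) else 0) = q := by
  rcases not_and_or.mp hag with ha | hg
  · rw [Finset.sum_comm]
    have e : ∀ v : ZMod q, ∑ u : ZMod q, (if a*u+g*v = s then (1:ℝ) else 0) = 1 := by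
      intro v
      have key : ∀ u : ZMod q, (a*u+g*v = s) ↔ (u = a⁻¹*(s-g*v)) := by
        intro u
        constructor
        · intro h
          field_simp
          linear_combination h
        · intro h
          rw [h]
          field_simp
          ring
      simp_rw [key]
      rw [Finset.sum_ite_eq' Finset.univ (a⁻¹*(s-g*v)) (fun _ => (1:ℝ))]
      simp
    simp_rw [e]
    rw [Finset.sum_const, aux_card_zmod]
    simp
  · have e : ∀ u : ZMod q, ∑ v : ZMod q, (if a*u+g*v = s then (1:ℝ) else 0) = 1 := by
      intro u
      have key : ∀ v : ZMod q, (a*u+g*v = s) ↔ (v = g⁻¹*(s-a*u)) := by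
        intro v
        constructor
        · intro h
          field_simp
          linear_combination h
        · intro h
          rw [h]
          field_simp
          ring
      simp_rw [key]
      rw [Finset.sum_ite_eq' Finset.univ (g⁻¹*(s-a*u)) (fun _ => (1:ℝ))]
      simp
    simp_rw [e]
    rw [Finset.sum_const, aux_card_zmod]
    simp

lemma aux_collapse (q : ℕ) [Fact (Nat.Prime q)] [NeZero q] (A : ZMod q → ℝ)
    (P2 : ZMod q → ZMod q → ℝ) (a g : ZMod q) :
    ∑ x₂ : ZMod q, A x₂ * (∑ u₂, ∑ v₂, if a*u₂+g*v₂ = x₂ then P2 u₂ v₂ else 0)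
      = ∑ u₂, ∑ v₂, A (a*u₂+g*v₂) * P2 u₂ v₂ := by
  have d1 : ∀ x₂ : ZMod q, A x₂ * (∑ u₂, ∑ v₂, if a*u₂+g*v₂ = x₂ then P2 u₂ v₂ else 0)
      = ∑ u₂, ∑ v₂, if a*u₂+g*v₂ = x₂ then A x₂ * P2 u₂ v₂ else 0 := by
    intro x₂
    rw [Finset.mul_sum]
    refine Finset.sum_congr rfl fun u₂ _ => ?_
    rw [Finset.mul_sum]
    exact Finset.sum_congr rfl fun v₂ _ => by rw [mul_ite, mul_zero]
  simp_rw [d1]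
  rw [Finset.sum_comm]
  refine Finset.sum_congr rfl fun u₂ _ => ?_
  rw [Finset.sum_comm]
  refine Finset.sum_congr rfl fun v₂ _ => ?_
  rw [Finset.sum_ite_eq Finset.univ (a*u₂+g*v₂) (fun x₂ => A x₂ * P2 u₂ v₂)]
  exact if_pos (Finset.mem_univ _)

/-- Part (1): `(P[α,γ])ᵇ = (P⁻)[α,γ]` pointwise. -/
lemma aux_part1 (q : ℕ) [Fact (Nat.Prime q)] [NeZero q] (M : MAC q) (a g : ZMod q)
    (y₁ y₂ : M.Y) (x : ZMod q) :
    (chB q (chLin q M a g)).Q x (y₁, y₂) = (chLin q (minusT q M) a g).Q x (y₁, y₂) := by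
  show (q:ℝ)⁻¹ * ∑ x₂,
      ((q:ℝ)⁻¹ * ∑ u₁, ∑ v₁, if a*u₁+g*v₁ = x+x₂ then M.P u₁ v₁ y₁ else 0) *
      ((q:ℝ)⁻¹ * ∑ u₂, ∑ v₂, if a*u₂+g*v₂ = x₂ then M.P u₂ v₂ y₂ else 0)
    = (q:ℝ)⁻¹ * ∑ u, ∑ v, if a*u+g*v = x then
        ((q:ℝ)^2)⁻¹ * ∑ u₂, ∑ v₂, M.P (u+u₂) (v+v₂) y₁ * M.P u₂ v₂ y₂ else 0
  trans ((q:ℝ)⁻¹ * (q:ℝ)⁻¹ * (q:ℝ)⁻¹ *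
      ∑ u₂, ∑ v₂, (∑ u₁, ∑ v₁, if a*u₁+g*v₁ = x + (a*u₂+g*v₂) then M.P u₁ v₁ y₁ else 0)
        * M.P u₂ v₂ y₂)
  · have e1 : ∀ X Y : ℝ, ((q:ℝ)⁻¹ * X) * ((q:ℝ)⁻¹ * Y) = (q:ℝ)⁻¹ * (q:ℝ)⁻¹ * (X * Y) :=
      fun _ _ => by ring
    simp_rw [e1, ← Finset.mul_sum]
    have hc := aux_collapse q
      (fun x₂ => ∑ u₁, ∑ v₁, if a*u₁+g*v₁ = x+x₂ then M.P u₁ v₁ y₁ else 0)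
      (fun u₂ v₂ => M.P u₂ v₂ y₂) a g
    rw [hc]
    ring
  · symm
    have key : ∀ u₂ v₂ : ZMod q,
        (∑ u, ∑ v, if a*u+g*v = x then M.P (u+u₂) (v+v₂) y₁ * M.P u₂ v₂ y₂ else 0)
        = (∑ u₁, ∑ v₁, if a*u₁+g*v₁ = x + (a*u₂+g*v₂) then M.P u₁ v₁ y₁ else 0)
            * M.P u₂ v₂ y₂ := by
      intro u₂ v₂
      rw [Finset.sum_mul]
      refine Fintype.sum_equiv (Equiv.addRight u₂) _ _ fun u => ?_
      simp only [Equiv.coe_addRight]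
      rw [Finset.sum_mul]
      refine Fintype.sum_equiv (Equiv.addRight v₂) _ _ fun v => ?_
      simp only [Equiv.coe_addRight]
      show (if a * u + g * v = x then M.P (u + u₂) (v + v₂) y₁ * M.P u₂ v₂ y₂ else 0) = (if a * (u + u₂) + g * (v + v₂) = x + (a * u₂ + g * v₂) then M.P (u + u₂) (v + v₂) y₁ else 0) * M.P u₂ v₂ y₂
      rw [ite_mul, zero_mul]
      exact if_congr ⟨fun h => by linear_combination h, fun h => by linear_combination h⟩ rfl rfl
    simp_rw [aux_pull q (((q:ℝ)^2)⁻¹), ← Finset.mul_sum, aux_ite_sum_push]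
    rw [aux_sum_swap_blocks]
    simp_rw [key]
    ring

/-- merging the `(u₁,v₁)` part of the `(P⁺)[α,γ]` output along `αu₁+γv₁` yields `(P[α,γ])ᵍ` -/
lemma aux_mergePlus (q : ℕ) [Fact (Nat.Prime q)] [NeZero q] (M : MAC q) (a g : ZMod q)
    [DecidableEq M.Y] (s x₁ : ZMod q) (y₁ y₂ : M.Y) :
    (∑ z : (M.Y × M.Y) × ZMod q × ZMod q,
        if ((z.1, a*z.2.1+g*z.2.2) : (M.Y × M.Y) × ZMod q) = ((y₁,y₂),x₁) then
          (chLin q (plusT q M) a g).Q s z / (q:ℝ) else 0)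
      = (chG q (chLin q M a g)).Q s ((y₁,y₂),x₁) / (q:ℝ) := by
  show (∑ z : (M.Y × M.Y) × ZMod q × ZMod q,
        if ((z.1, a*z.2.1+g*z.2.2) : (M.Y × M.Y) × ZMod q) = ((y₁,y₂),x₁) then
          ((q:ℝ)⁻¹ * ∑ u, ∑ v, if a*u+g*v = s then
            ((q:ℝ)^2)⁻¹ * (M.P (z.2.1+u) (z.2.2+v) z.1.1 * M.P u v z.1.2) else 0) / (q:ℝ)
        else 0)
      = ((q:ℝ)⁻¹ * (((q:ℝ)⁻¹ * ∑ u, ∑ v, if a*u+g*v = x₁+s then M.P u v y₁ else 0) *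
          ((q:ℝ)⁻¹ * ∑ u, ∑ v, if a*u+g*v = s then M.P u v y₂ else 0))) / (q:ℝ)
  rw [Fintype.sum_prod_type]
  dsimp only
  simp_rw [Prod.mk.injEq, ← aux_ite_ite_and, ← aux_ite_sum_push]
  rw [Finset.sum_ite_eq' Finset.univ ((y₁,y₂) : M.Y × M.Y)]
  rw [if_pos (Finset.mem_univ _)]
  dsimp only
  rw [Fintype.sum_prod_type]
  dsimp only
  -- now: ∑ u₁, ∑ v₁, if a*u₁+g*v₁ = x₁ then (q⁻¹ * ∑∑ ite _ ((q²)⁻¹ * _) 0)/q else 0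
  have t2 : ∀ (c : Prop) [Decidable c] (S : ℝ),
      (if c then ((q:ℝ)⁻¹ * S) / (q:ℝ) else 0)
        = (q:ℝ)⁻¹ * (q:ℝ)⁻¹ * (if c then S else 0) := by
    intro c _ S
    split_ifs <;> ring
  simp_rw [aux_pull q (((q:ℝ)^2)⁻¹), ← Finset.mul_sum, t2, aux_pull q (((q:ℝ)^2)⁻¹),
    ← Finset.mul_sum, aux_ite_sum_push, aux_ite_ite_and]
  rw [aux_sum_swap_blocks]
  have key2 : ∀ u v : ZMod q,
      (∑ u₁, ∑ v₁, if (a*u₁+g*v₁ = x₁) ∧ (a*u+g*v = s) then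
          M.P (u₁+u) (v₁+v) y₁ * M.P u v y₂ else 0)
      = if a*u+g*v = s then
          (∑ u', ∑ v', if a*u'+g*v' = x₁+s then M.P u' v' y₁ else 0) * M.P u v y₂ else 0 := by
    intro u v
    by_cases hc : a*u+g*v = s
    · simp only [hc, and_true, if_true]
      rw [Finset.sum_mul]
      refine Fintype.sum_equiv (Equiv.addRight u) _ _ fun u₁ => ?_
      simp only [Equiv.coe_addRight]
      rw [Finset.sum_mul]
      refine Fintype.sum_equiv (Equiv.addRight v) _ _ fun v₁ => ?_
      simp only [Equiv.coe_addRight]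
      show (if a * u₁ + g * v₁ = x₁ then M.P (u₁ + u) (v₁ + v) y₁ * M.P u v y₂ else 0) = (if a * (u₁ + u) + g * (v₁ + v) = x₁ + s then M.P (u₁ + u) (v₁ + v) y₁ else 0) * M.P u v y₂
      rw [ite_mul, zero_mul]
      refine if_congr ⟨fun h => by linear_combination h + hc, fun h => by linear_combination h - hc⟩ rfl rfl
    · simp [hc]
  simp_rw [key2, aux_pull q
    (∑ u', ∑ v', if a*u'+g*v' = x₁+s then M.P u' v' y₁ else 0), ← Finset.mul_sum]
  ring

/-- **Appendix B, claim (ii)**: `(P[α,γ])^b` and `(P⁻)[α,γ]` are the same channel;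
consequently `I((P⁻)[α,γ]) + I((P⁺)[α,γ]) ≥ 2 I(P[α,γ])`. -/
theorem chB_equivalent (q : ℕ) [Fact (Nat.Prime q)] (M : MAC q) (hM : IsMAC M)
    (a g : ZMod q) (hag : (a, g) ≠ (0, 0)) :
    (∀ (y₁ y₂ : M.Y) (x : ZMod q),
      (chB q (chLin q M a g)).Q x (y₁, y₂) = (chLin q (minusT q M) a g).Q x (y₁, y₂)) ∧
    2 * Ich q (chLin q M a g) ≤
      Ich q (chLin q (minusT q M) a g) + Ich q (chLin q (plusT q M) a g) := by
  obtain ⟨hM0, hM1⟩ := hM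
  haveI : NeZero q := ⟨(Fact.out : q.Prime).pos.ne'⟩
  have hq1 : 1 < q := (Fact.out : q.Prime).one_lt
  have h0 : (q:ℝ) ≠ 0 := Nat.cast_ne_zero.mpr (NeZero.ne q)
  have hag' : ¬(a = 0 ∧ g = 0) := fun h => hag (by rw [h.1, h.2])
  refine ⟨fun y₁ y₂ x => aux_part1 q M a g y₁ y₂ x, ?_⟩
  have hrowQ : ∀ x : ZMod q, ∑ b, (chLin q M a g).Q x b = 1 := by
    intro x
    show ∑ y : M.Y, (q:ℝ)⁻¹ * ∑ u, ∑ v, (if a*u+g*v = x then M.P u v y else 0) = 1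
    rw [← Finset.mul_sum]
    have e : ∑ y : M.Y, ∑ u, ∑ v, (if a*u+g*v = x then M.P u v y else 0)
        = ∑ u, ∑ v, ∑ y : M.Y, (if a*u+g*v = x then M.P u v y else 0) := by
      rw [Finset.sum_comm]
      exact Finset.sum_congr rfl fun u _ => Finset.sum_comm
    rw [e]
    have e2 : ∀ u v : ZMod q, ∑ y : M.Y, (if a*u+g*v = x then M.P u v y else 0)
        = (if a*u+g*v = x then (1:ℝ) else 0) := by
      intro u v
      rw [← aux_ite_sum_push, hM1 u v]
    simp_rw [e2]
    rw [aux_count q a g x hag']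
    simp [h0]
  have hchain : Ich q (chB q (chLin q M a g)) + Ich q (chG q (chLin q M a g))
      = 2 * Ich q (chLin q M a g) := aux_chainEq q (chLin q M a g).Q hrowQ
  have hminus : Ich q (chLin q (minusT q M) a g) = Ich q (chB q (chLin q M a g)) := by
    have hfun : (fun (x : ZMod q) (w : M.Y × M.Y) => (chB q (chLin q M a g)).Q x w / (q:ℝ))
        = (fun (x : ZMod q) (w : M.Y × M.Y) =>
            (chLin q (minusT q M) a g).Q x w / (q:ℝ)) := by
      funext x w
      obtain ⟨y₁, y₂⟩ := w
      exact congrArg (fun t => t / (q:ℝ)) (aux_part1 q M a g y₁ y₂ x)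
    show MIq q (fun (x : ZMod q) (w : M.Y × M.Y) => (chLin q (minusT q M) a g).Q x w / (q:ℝ))
        = MIq q (fun (x : ZMod q) (w : M.Y × M.Y) => (chB q (chLin q M a g)).Q x w / (q:ℝ))
    rw [hfun]
  have hplus : Ich q (chG q (chLin q M a g)) ≤ Ich q (chLin q (plusT q M) a g) := by
    letI : DecidableEq M.Y := Classical.decEq _
    have hp0 : ∀ (sx : ZMod q) (z : (M.Y × M.Y) × ZMod q × ZMod q),
        0 ≤ (chLin q (plusT q M) a g).Q sx z / (q:ℝ) := by
      intro sx z
      apply div_nonneg _ (by positivity)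
      show 0 ≤ (q:ℝ)⁻¹ * ∑ u, ∑ v, (if a*u+g*v = sx then (plusT q M).P u v z else 0)
      refine mul_nonneg (by positivity)
        (Finset.sum_nonneg fun u _ => Finset.sum_nonneg fun v _ => ?_)
      split_ifs
      · exact mul_nonneg (by positivity) (mul_nonneg (hM0 _ _ _) (hM0 _ _ _))
      · exact le_rfl
    have hd := MIq_merge_le (q := q) hq1
      (fun (sx : ZMod q) (z : (M.Y × M.Y) × ZMod q × ZMod q) =>
        (chLin q (plusT q M) a g).Q sx z / (q:ℝ))
      hp0
      (fun z : (M.Y × M.Y) × ZMod q × ZMod q =>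
        ((z.1, a*z.2.1+g*z.2.2) : (M.Y × M.Y) × ZMod q))
    have hfun : (fun (sx : ZMod q) (c : (M.Y × M.Y) × ZMod q) =>
          ∑ z : (M.Y × M.Y) × ZMod q × ZMod q,
            if ((z.1, a*z.2.1+g*z.2.2) : (M.Y × M.Y) × ZMod q) = c then
              (chLin q (plusT q M) a g).Q sx z / (q:ℝ) else 0)
        = fun sx c => (chG q (chLin q M a g)).Q sx c / (q:ℝ) := by
      funext sx c
      obtain ⟨⟨y₁, y₂⟩, x₁⟩ := c
      exact aux_mergePlus q M a g sx x₁ y₁ y₂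
    rw [hfun] at hd
    exact hd
  linarith [hchain, hminus, hplus]

end PolarMAC
end
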